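/- arXiv:1802.08843 — 7 statements merged into one kernel-verified Lean document; each statement's English description precedes it below -/
import Mathlib

section
/- Let k and r be integers with k ≥ 2 and r ≥ 2, let t = t(k,r), and let H be a k-edge-maximal r-uniform hypergraph on n vertices with n ≥ t. Then the number of edges of H satisfies |E(H)| ≤ C(t,r) + (n−t)·k, where C(a,b) denotes the binomial coefficient (taken to be 0 when b > a). -/
/-- A (finite) hypergraph: a finite vertex set together with a finite set of edges,
    each edge being a finite set of vertices. -/
structure FinHypergraph (α : Type*) where
  verts : Finset α
  edges : Finset (Finset α)

namespace FinHypergraph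

variable {α : Type*} [DecidableEq α]

/-- `H.cut X` is the set of edges of `H` intersecting both `X` and `V(H) \ X`. -/
def cut (H : FinHypergraph α) (X : Finset α) : Finset (Finset α) :=
  H.edges.filter fun e => (e ∩ X).Nonempty ∧ (e ∩ (H.verts \ X)).Nonempty

/-- The edge-connectivity `κ'(H)`: the minimum of `|H.cut X|` over nonempty proper
    subsets `X` of the vertex set. -/
noncomputable def edgeConn (H : FinHypergraph α) : ℕ :=
  sInf {d : ℕ | ∃ X : Finset α, X ⊆ H.verts ∧ X.Nonempty ∧ X ≠ H.verts ∧ d = (H.cut X).card}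

/-- `H'` is a subhypergraph of `H`. -/
def IsSub (H' H : FinHypergraph α) : Prop :=
  H'.verts ⊆ H.verts ∧ H'.edges ⊆ H.edges

/-- The strength `κ̄'(H)`: the maximum edge-connectivity over all subhypergraphs of `H`. -/
noncomputable def strength (H : FinHypergraph α) : ℕ :=
  sSup {d : ℕ | ∃ H' : FinHypergraph α, H'.IsSub H ∧ d = H'.edgeConn}

/-- `H` is `r`-uniform (with all edges inside the vertex set). -/
def IsUniform (H : FinHypergraph α) (r : ℕ) : Prop :=
  ∀ e ∈ H.edges, e ⊆ H.verts ∧ e.card = r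

/-- `H + e`: add a new edge. -/
def addEdge (H : FinHypergraph α) (e : Finset α) : FinHypergraph α :=
  ⟨H.verts, insert e H.edges⟩

/-- `H - X`: delete a set of edges. -/
def deleteEdges (H : FinHypergraph α) (X : Finset (Finset α)) : FinHypergraph α :=
  ⟨H.verts, H.edges \ X⟩

/-- The subhypergraph induced by a vertex subset `S`. -/
def induce (H : FinHypergraph α) (S : Finset α) : FinHypergraph α :=
  ⟨S, H.edges.filter fun e => e ⊆ S⟩

/-- `H` is a `k`-edge-maximal `r`-uniform hypergraph: `κ̄'(H) ≤ k`, but adding any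
    missing `r`-subset of the vertex set as an edge raises the strength above `k`. -/
def IsEdgeMaximal (H : FinHypergraph α) (k r : ℕ) : Prop :=
  H.IsUniform r ∧ H.strength ≤ k ∧
    ∀ e : Finset α, e ⊆ H.verts → e.card = r → e ∉ H.edges →
      k + 1 ≤ (H.addEdge e).strength

/-- The degree of a vertex: the number of edges containing it. -/
def degree (H : FinHypergraph α) (v : α) : ℕ :=
  (H.edges.filter fun e => v ∈ e).card

/-- The minimum degree `δ(H)`. -/
noncomputable def minDegree (H : FinHypergraph α) : ℕ :=
  sInf {d : ℕ | ∃ v ∈ H.verts, d = H.degree v}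

/-- `X` is a minimum edge-cut of `H`: it is an edge-cut and has cardinality `κ'(H)`. -/
def IsMinEdgeCut (H : FinHypergraph α) (X : Finset (Finset α)) : Prop :=
  (∃ Y : Finset α, Y ⊆ H.verts ∧ Y.Nonempty ∧ Y ≠ H.verts ∧ X = H.cut Y) ∧
    X.card = H.edgeConn

/-- The family `M(n; k, r)` (with `t = t(k,r)` given as a parameter): start from a complete
    `r`-uniform hypergraph on `t` vertices and repeatedly add a new vertex together with `k`
    new `r`-element edges through it whose remaining vertices are old vertices. -/
inductive MFamily (k r t : ℕ) : FinHypergraph α → Prop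
  | base (V : Finset α) (hV : V.card = t) :
      MFamily k r t ⟨V, V.powersetCard r⟩
  | step (H : FinHypergraph α) (v : α) (E : Finset (Finset α)) :
      MFamily k r t H → v ∉ H.verts → E.card = k →
      (∀ e ∈ E, v ∈ e ∧ e ⊆ insert v H.verts ∧ e.card = r) →
      MFamily k r t ⟨insert v H.verts, H.edges ∪ E⟩

end FinHypergraph

lemma choose_mul_id (m r : ℕ) (hm : 1 ≤ m) (hr : 1 ≤ r) :
    m.choose r * r = m * (m - 1).choose (r - 1) := by
  obtain ⟨m', rfl⟩ : ∃ m', m = m' + 1 := ⟨m - 1, by omega⟩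
  obtain ⟨r', rfl⟩ : ∃ r', r = r' + 1 := ⟨r - 1, by omega⟩
  simpa using (Nat.add_one_mul_choose_eq m' r').symm

lemma star_lemma (k r t m : ℕ) (hr : 2 ≤ r) (ht1 : (t - 1).choose (r - 1) ≤ k)
    (hmt : m ≤ t) : 2 * m.choose r ≤ m * k := by
  rcases Nat.eq_zero_or_pos m with rfl | hm
  · simp [Nat.choose_eq_zero_of_lt (show 0 < r by omega)]
  have h1 : m.choose r * r = m * (m - 1).choose (r - 1) := choose_mul_id m r hm (by omega)
  have h2 : (m - 1).choose (r - 1) ≤ k :=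
    le_trans (Nat.choose_le_choose _ (by omega)) ht1
  calc 2 * m.choose r = m.choose r * 2 := by ring
    _ ≤ m.choose r * r := Nat.mul_le_mul_left _ hr
    _ = m * (m - 1).choose (r - 1) := h1
    _ ≤ m * k := Nat.mul_le_mul_left _ h2

lemma claim1 (r : ℕ) (hr : 1 ≤ r) (b : ℕ) :
    ∀ c : ℕ, b.choose r + c * b.choose (r - 1) ≤ (b + c).choose r := by
  intro c
  induction c with
  | zero => simp
  | succ c ih =>
    obtain ⟨r', rfl⟩ : ∃ r', r = r' + 1 := ⟨r - 1, by omega⟩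
    have pascal : (b + c + 1).choose (r' + 1)
        = (b + c).choose r' + (b + c).choose (r' + 1) := Nat.choose_succ_succ _ _
    have hmono : b.choose r' ≤ (b + c).choose r' :=
      Nat.choose_le_choose _ (by omega)
    have : b + (c + 1) = (b + c) + 1 := by omega
    rw [this, pascal]
    simp only [Nat.add_sub_cancel] at ih ⊢
    nlinarith [hmono]

-- star2 : for 2 ≤ m ≤ t : C(m,r) + k ≤ m * k
lemma star2 (k r t m : ℕ) (hk : 1 ≤ k) (hr : 2 ≤ r) (ht1 : (t - 1).choose (r - 1) ≤ k)
    (hm2 : 2 ≤ m) (hmt : m ≤ t) : m.choose r + k ≤ m * k := by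
  have h1 := star_lemma k r t m hr ht1 hmt
  have h2 : 2 * k ≤ m * k := Nat.mul_le_mul_right _ hm2
  nlinarith

-- asymmetric numeric core, a ≤ b
lemma numeric_core (k r t a b : ℕ) (hk : 2 ≤ k) (hr : 2 ≤ r) (ht : 3 ≤ t)
    (ht1 : (t - 1).choose (r - 1) ≤ k) (ha : 1 ≤ a) (hb : 1 ≤ b)
    (hab : t + 1 ≤ a + b) (hle : a ≤ b) :
    ((min a t).choose r + (a - t) * k) + ((min b t).choose r + (b - t) * k) + k
      ≤ t.choose r + (a + b - t) * k := by
  rcases le_or_gt t a with hta | hat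
  · -- t ≤ a ≤ b
    have htb : t ≤ b := le_trans hta hle
    rw [min_eq_right hta, min_eq_right htb]
    obtain ⟨a', rfl⟩ : ∃ a', a = t + a' := ⟨a - t, by omega⟩
    obtain ⟨b', rfl⟩ : ∃ b', b = t + b' := ⟨b - t, by omega⟩
    have e1 : t + a' - t = a' := by omega
    have e2 : t + b' - t = b' := by omega
    have e3 : t + a' + (t + b') - t = t + a' + b' := by omega
    rw [e1, e2, e3]
    have h1 := star2 k r t t (by omega) hr ht1 (by omega) le_rfl
    nlinarith
  · rcases le_or_gt t b with htb | hbt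
    · -- a < t ≤ b
      rw [min_eq_left (le_of_lt hat), min_eq_right htb]
      obtain ⟨b', rfl⟩ : ∃ b', b = t + b' := ⟨b - t, by omega⟩
      have e1 : a - t = 0 := by omega
      have e2 : t + b' - t = b' := by omega
      have e3 : a + (t + b') - t = a + b' := by omega
      rw [e1, e2, e3]
      rcases Nat.lt_or_ge a 2 with ha1 | ha2
      · have : a = 1 := by omega
        subst this
        have : Nat.choose 1 r = 0 := Nat.choose_eq_zero_of_lt (by omega)
        rw [this]
        nlinarith
      · have h1 := star2 k r t a (by omega) hr ht1 ha2 (by omega)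
        nlinarith
    · -- a ≤ b < t, a+b ≥ t+1
      rw [min_eq_left (le_of_lt hat), min_eq_left (le_of_lt hbt)]
      have e1 : a - t = 0 := by omega
      have e2 : b - t = 0 := by omega
      rw [e1, e2]
      set c := t - b with hc
      have hc1 : 1 ≤ c := by omega
      obtain ⟨d, had⟩ : ∃ d, a = c + d + 1 := ⟨a - c - 1, by omega⟩
      have hbc : b + c = t := by omega
      have e3 : a + b - t = d + 1 := by omega
      rw [e3]
      -- claim 1 : C(b,r) + c * C(b,r-1) ≤ C(t,r)
      have h1 : b.choose r + c * b.choose (r - 1) ≤ t.choose r := by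
        have := claim1 r (by omega) b c
        rwa [hbc] at this
      -- claim 2 : C(a,r) ≤ c * C(b,r-1) + d * k
      set X := (a - 1).choose (r - 1) with hX
      set Y := b.choose (r - 1) with hY
      have hXY : X ≤ Y := Nat.choose_le_choose _ (by omega)
      have hXk : X ≤ k := le_trans (Nat.choose_le_choose _ (by omega)) ht1
      have hid : a.choose r * r = a * X := choose_mul_id a r (by omega) (by omega)
      have h2a : 2 * a.choose r ≤ a * X := by
        calc 2 * a.choose r = a.choose r * 2 := by ring
          _ ≤ a.choose r * r := Nat.mul_le_mul_left _ hr
          _ = a * X := hid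
      have h2 : a.choose r ≤ c * Y + d * k := by
        have haX : a * X = c * X + d * X + X := by rw [had]; ring
        have t1 : c * X ≤ c * Y := Nat.mul_le_mul_left _ hXY
        have t2 : d * X ≤ d * k := Nat.mul_le_mul_left _ hXk
        have t3 : X ≤ c * Y := le_trans hXY (Nat.le_mul_of_pos_left Y (by omega))
        have t4 : 2 * a.choose r ≤ 2 * (c * Y) + d * k := by linarith
        linarith [Nat.zero_le (d * k)]
      have e4 : (d + 1) * k = d * k + k := by ring
      linarith

lemma numeric (k r t a b : ℕ) (hk : 2 ≤ k) (hr : 2 ≤ r) (ht : 3 ≤ t)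
    (ht1 : (t - 1).choose (r - 1) ≤ k) (ha : 1 ≤ a) (hb : 1 ≤ b)
    (hab : t + 1 ≤ a + b) :
    ((min a t).choose r + (a - t) * k) + ((min b t).choose r + (b - t) * k) + k
      ≤ t.choose r + (a + b - t) * k := by
  rcases le_total a b with h | h
  · exact numeric_core k r t a b hk hr ht ht1 ha hb hab h
  · have := numeric_core k r t b a hk hr ht ht1 hb ha (by omega) h
    rw [Nat.add_comm b a] at this
    linarith

namespace EMaux
open Finset FinHypergraph

variable {α : Type*} [DecidableEq α]

lemma edgeConn_le_card (H : FinHypergraph α) : H.edgeConn ≤ H.edges.card := by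
  set D := {d : ℕ | ∃ X : Finset α, X ⊆ H.verts ∧ X.Nonempty ∧ X ≠ H.verts ∧ d = (H.cut X).card}
    with hD
  by_cases hne : D.Nonempty
  · obtain ⟨d, X, _, _, _, hd⟩ := hne
    refine le_trans (Nat.sInf_le (show d ∈ D from ⟨X, ‹_›, ‹_›, ‹_›, hd⟩)) ?_
    rw [hd]
    exact card_le_card (filter_subset _ _)
  · rw [Set.not_nonempty_iff_eq_empty] at hne
    simp [edgeConn, ← hD, hne]

lemma edgeConn_le_strength (H H' : FinHypergraph α) (hsub : H'.IsSub H) :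
    H'.edgeConn ≤ H.strength := by
  apply le_csSup
  · refine ⟨H.edges.card, ?_⟩
    rintro d ⟨H'', hsub'', rfl⟩
    exact le_trans (edgeConn_le_card H'') (card_le_card hsub''.2)
  · exact ⟨H', hsub, rfl⟩

/-- Key lemma: in an induced subhypergraph there is a small cut. -/
lemma exists_small_cut (H : FinHypergraph α) (k : ℕ) (hs : H.strength ≤ k)
    (S : Finset α) (hS : S ⊆ H.verts) (h2 : 2 ≤ S.card) :
    ∃ X : Finset α, X ⊆ S ∧ X.Nonempty ∧ X ≠ S ∧ ((H.induce S).cut X).card ≤ k := by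
  set H' := H.induce S with hH'
  have hsub : H'.IsSub H := ⟨hS, filter_subset _ _⟩
  have hconn : H'.edgeConn ≤ k := le_trans (edgeConn_le_strength H H' hsub) hs
  set D := {d : ℕ | ∃ X : Finset α, X ⊆ H'.verts ∧ X.Nonempty ∧ X ≠ H'.verts ∧
    d = (H'.cut X).card} with hD
  have hvertsS : H'.verts = S := rfl
  have hne : D.Nonempty := by
    obtain ⟨x, hx⟩ := Finset.card_pos.mp (by omega : 0 < S.card)
    refine ⟨((H'.cut {x}).card), {x}, ?_, ⟨x, mem_singleton_self x⟩, ?_, rfl⟩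
    · rw [hvertsS]; exact singleton_subset_iff.mpr hx
    · rw [hvertsS]
      intro h
      have := congrArg Finset.card h
      simp at this
      omega
  have hmem : H'.edgeConn ∈ D := Nat.sInf_mem hne
  obtain ⟨X, hXS, hXne, hXneq, hXcard⟩ := hmem
  rw [hvertsS] at hXS hXneq
  exact ⟨X, hXS, hXne, hXneq, by rw [← hXcard]; exact hconn⟩

/-- Main induction: the number of edges inside any vertex subset `S` is bounded. -/
lemma main_bound (H : FinHypergraph α) (k r t : ℕ) (hk : 2 ≤ k) (hr : 2 ≤ r) (ht : 3 ≤ t)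
    (ht1 : (t - 1).choose (r - 1) ≤ k) (hU : H.IsUniform r) (hs : H.strength ≤ k) :
    ∀ m : ℕ, ∀ S : Finset α, S.card = m → S ⊆ H.verts →
      (H.edges.filter (fun e => e ⊆ S)).card ≤ (min m t).choose r + (m - t) * k := by
  intro m
  induction m using Nat.strong_induction_on with
  | _ m ih =>
    intro S hScard hSsub
    rcases le_or_gt m t with hmt | htm
    · -- small case: all edges inside S are r-subsets of S
      have hsub : H.edges.filter (fun e => e ⊆ S) ⊆ S.powersetCard r := by
        intro e he
        rw [mem_filter] at he
        exact mem_powersetCard.mpr ⟨he.2, (hU e he.1).2⟩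
      calc (H.edges.filter (fun e => e ⊆ S)).card ≤ (S.powersetCard r).card :=
            card_le_card hsub
        _ = m.choose r := by rw [card_powersetCard, hScard]
        _ = (min m t).choose r := by rw [min_eq_left hmt]
        _ ≤ (min m t).choose r + (m - t) * k := Nat.le_add_right _ _
    · -- large case: split along a small cut
      have h2 : 2 ≤ S.card := by omega
      obtain ⟨X, hXS, hXne, hXneq, hcut⟩ := exists_small_cut H k hs S hSsub h2
      have hBne : (S \ X).Nonempty := by
        have hns : ¬ S ⊆ X := fun h => hXneq (Finset.Subset.antisymm hXS h)
        obtain ⟨y, hyS, hyX⟩ := Finset.not_subset.mp hns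
        exact ⟨y, Finset.mem_sdiff.mpr ⟨hyS, hyX⟩⟩
      have hXcard : X.card ≤ S.card := card_le_card hXS
      have hBcard : (S \ X).card = S.card - X.card := card_sdiff_of_subset hXS
      have ha1 : 1 ≤ X.card := Finset.card_pos.mpr hXne
      have hb1 : 1 ≤ (S \ X).card := Finset.card_pos.mpr hBne
      have hab : X.card + (S \ X).card = m := by omega
      -- splitting the edge set
      have hsplit : H.edges.filter (fun e => e ⊆ S) ⊆
          (H.edges.filter (fun e => e ⊆ X) ∪ H.edges.filter (fun e => e ⊆ S \ X)) ∪
            (H.induce S).cut X := by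
        intro e he
        rw [mem_filter] at he
        obtain ⟨heE, heS⟩ := he
        rw [mem_union, mem_union]
        by_cases heA : e ⊆ X
        · exact Or.inl (Or.inl (mem_filter.mpr ⟨heE, heA⟩))
        by_cases heB : e ⊆ S \ X
        · exact Or.inl (Or.inr (mem_filter.mpr ⟨heE, heB⟩))
        · refine Or.inr ?_
          rw [FinHypergraph.cut, mem_filter]
          refine ⟨?_, ?_, ?_⟩
          · exact mem_filter.mpr ⟨heE, heS⟩
          · obtain ⟨v, hv, hvB⟩ := Finset.not_subset.mp heB
            have hvS : v ∈ S := heS hv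
            have hvX : v ∈ X := by
              by_contra hvX
              exact hvB (Finset.mem_sdiff.mpr ⟨hvS, hvX⟩)
            exact ⟨v, Finset.mem_inter.mpr ⟨hv, hvX⟩⟩
          · obtain ⟨u, hu, huA⟩ := Finset.not_subset.mp heA
            have huS : u ∈ S := heS hu
            refine ⟨u, Finset.mem_inter.mpr ⟨hu, ?_⟩⟩
            show u ∈ (H.induce S).verts \ X
            exact Finset.mem_sdiff.mpr ⟨huS, huA⟩
      have hcard : (H.edges.filter (fun e => e ⊆ S)).card ≤
          (H.edges.filter (fun e => e ⊆ X)).card +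
            (H.edges.filter (fun e => e ⊆ S \ X)).card + ((H.induce S).cut X).card := by
        calc (H.edges.filter (fun e => e ⊆ S)).card
            ≤ ((H.edges.filter (fun e => e ⊆ X) ∪ H.edges.filter (fun e => e ⊆ S \ X)) ∪
                (H.induce S).cut X).card := card_le_card hsplit
          _ ≤ (H.edges.filter (fun e => e ⊆ X) ∪ H.edges.filter (fun e => e ⊆ S \ X)).card +
                ((H.induce S).cut X).card := card_union_le _ _
          _ ≤ _ := by
              have := card_union_le (H.edges.filter (fun e => e ⊆ X))
                (H.edges.filter (fun e => e ⊆ S \ X))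
              omega
      have ihA := ih X.card (by omega) X rfl (hXS.trans hSsub)
      have ihB := ih (S \ X).card (by omega) (S \ X) rfl ((sdiff_subset).trans hSsub)
      have hnum := numeric k r t X.card (S \ X).card hk hr ht ht1 ha1 hb1 (by omega)
      rw [hab] at hnum
      have hmin : min m t = t := min_eq_right (le_of_lt htm)
      rw [hmin]
      omega

end EMaux
/-- Let `k, r ≥ 2`, let `t = t(k,r)` (i.e. `C(t-1,r-1) ≤ k < C(t,r-1)`),
and let `H` be a `k`-edge-maximal `r`-uniform hypergraph on `n ≥ t` vertices.
Then `|E(H)| ≤ C(t,r) + (n-t)·k`. -/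
theorem edge_maximal_upper_bound {α : Type*} [DecidableEq α] (k r t n : ℕ)
    (hk : 2 ≤ k) (hr : 2 ≤ r)
    (ht1 : (t - 1).choose (r - 1) ≤ k) (ht2 : k < t.choose (r - 1))
    (H : FinHypergraph α) (hH : H.IsEdgeMaximal k r)
    (hn : H.verts.card = n) (hnt : t ≤ n) :
    H.edges.card ≤ t.choose r + (n - t) * k := by
  obtain ⟨hU, hs, _⟩ := hH
  have ht3 : 3 ≤ t := by
    by_contra h
    push_neg at h
    have hj : 1 ≤ r - 1 := by omega
    have hsmall : t.choose (r - 1) ≤ 2 := by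
      rcases Nat.lt_or_ge t (r - 1) with hlt | hge
      · simp [Nat.choose_eq_zero_of_lt hlt]
      · have hrr : r ≤ 3 := by omega
        have htt : t ≤ 2 := by omega
        interval_cases t <;> interval_cases r <;> first | decide | omega
    omega
  have hmain := EMaux.main_bound H k r t hk hr ht3 ht1 hU hs n H.verts hn le_rfl
  have hfull : H.edges.filter (fun e => e ⊆ H.verts) = H.edges :=
    Finset.filter_true_of_mem (fun e he => (hU e he).1)
  rw [hfull, min_eq_right hnt] at hmain
  exact hmain
end

section
/- Let k and r be integers with k ≥ 2 and r ≥ 2, and let t = t(k,r). Assume n ≥ t if C(t−1,r−1) = k, and n ≥ t+1 if C(t−1,r−1) < k. Then every hypergraph H in the family M(n;k,r) has minimum degree δ(H) = k. -/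
section Aux

variable {α : Type*} [DecidableEq α]

/-- Number of `r`-subsets of `V` containing a fixed vertex `u`. -/
lemma count_powersetCard_mem (V : Finset α) (u : α) (hu : u ∈ V) (r : ℕ) (hr : 1 ≤ r) :
    ((V.powersetCard r).filter fun e => u ∈ e).card = (V.card - 1).choose (r - 1) := by
  have : ((V.powersetCard r).filter fun e => u ∈ e).card
      = ((V.erase u).powersetCard (r - 1)).card := by
    refine Finset.card_bij' (fun e _ => e.erase u) (fun s _ => insert u s) ?_ ?_ ?_ ?_
    · intro e he
      simp only [Finset.mem_filter, Finset.mem_powersetCard] at he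
      obtain ⟨⟨hsub, hcard⟩, hmem⟩ := he
      rw [Finset.mem_powersetCard]
      exact ⟨Finset.erase_subset_erase u hsub,
        by rw [Finset.card_erase_of_mem hmem, hcard]⟩
    · intro s hs
      rw [Finset.mem_powersetCard] at hs
      obtain ⟨hsub, hcard⟩ := hs
      have hus : u ∉ s := fun h => (Finset.notMem_erase u V) (hsub h)
      simp only [Finset.mem_filter, Finset.mem_powersetCard]
      refine ⟨⟨Finset.insert_subset hu (hsub.trans (Finset.erase_subset u V)), ?_⟩,
        Finset.mem_insert_self u s⟩
      rw [Finset.card_insert_of_notMem hus, hcard]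
      omega
    · intro e he
      simp only [Finset.mem_filter] at he
      exact Finset.insert_erase he.2
    · intro s hs
      rw [Finset.mem_powersetCard] at hs
      have hus : u ∉ s := fun h => (Finset.notMem_erase u V) (hs.1 h)
      exact Finset.erase_insert hus
  rw [this, Finset.card_powersetCard, Finset.card_erase_of_mem hu]

/-- Pigeonhole: among edges through `v` with remaining vertices in `W`, at most
`C(|W|-1, r-1)` avoid a fixed `u ∈ W`. -/
lemma count_avoid_le (E : Finset (Finset α)) (W : Finset α) (v u : α) (r : ℕ)
    (_hv : v ∉ W) (hu : u ∈ W)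
    (hE : ∀ e ∈ E, v ∈ e ∧ e ⊆ insert v W ∧ e.card = r) :
    (E.filter fun e => u ∉ e).card ≤ (W.card - 1).choose (r - 1) := by
  have hle : (E.filter fun e => u ∉ e).card ≤ ((W.erase u).powersetCard (r-1)).card := by
    apply Finset.card_le_card_of_injOn (fun e => e.erase v)
    · intro e he
      rw [Finset.mem_coe, Finset.mem_filter] at he
      obtain ⟨heE, hue⟩ := he
      obtain ⟨hve, hsub, hcard⟩ := hE e heE
      rw [Finset.mem_coe, Finset.mem_powersetCard]
      constructor
      · intro x hx
        rw [Finset.mem_erase] at hx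
        have := hsub hx.2
        rw [Finset.mem_insert] at this
        rcases this with h | h
        · exact absurd h hx.1
        · exact Finset.mem_erase.2 ⟨fun hxu => hue (hxu ▸ hx.2), h⟩
      · rw [Finset.card_erase_of_mem hve, hcard]
    · intro e he f hf hef
      rw [Finset.mem_coe, Finset.mem_filter] at he hf
      have h1 := (hE e he.1).1
      have h2 := (hE f hf.1).1
      have : insert v (e.erase v) = insert v (f.erase v) := congrArg (insert v) hef
      rwa [Finset.insert_erase h1, Finset.insert_erase h2] at this
  rw [Finset.card_powersetCard, Finset.card_erase_of_mem hu] at hle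
  exact hle

end Aux

open FinHypergraph in
lemma MFamily_invariant {α : Type*} [DecidableEq α] (k r t : ℕ)
    (hr : 2 ≤ r) (ht1 : (t - 1).choose (r - 1) ≤ k)
    (H : FinHypergraph α) (hH : FinHypergraph.MFamily k r t H) :
    H.IsUniform r ∧ t ≤ H.verts.card ∧
      ((H.verts.card = t ∧ H.edges = H.verts.powersetCard r) ∨
        ((∃ v ∈ H.verts, H.degree v = k) ∧ ∀ v ∈ H.verts, k ≤ H.degree v)) := by
  induction hH with
  | base V hV =>
    refine ⟨fun e he => ?_, by simp [hV], Or.inl ⟨hV, rfl⟩⟩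
    rw [Finset.mem_powersetCard] at he
    exact he
  | step H v E hHprev hv hEcard hEe ih =>
    obtain ⟨huni, hcard, hdisj⟩ := ih
    -- the new hypergraph is H' := ⟨insert v H.verts, H.edges ∪ E⟩
    have hvins : v ∉ H.verts := hv
    have hEdisj : Disjoint H.edges E := by
      rw [Finset.disjoint_left]
      intro e he heE
      exact hv ((huni e he).1 ((hEe e heE).1))
    have hdeg : ∀ u : α, (FinHypergraph.mk (insert v H.verts) (H.edges ∪ E)).degree u
        = H.degree u + (E.filter fun e => u ∈ e).card := by
      intro u
      show ((H.edges ∪ E).filter fun e => u ∈ e).card = _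
      rw [Finset.filter_union, Finset.card_union_of_disjoint
        (Finset.disjoint_filter_filter hEdisj)]
      rfl
    have hdegv : (FinHypergraph.mk (insert v H.verts) (H.edges ∪ E)).degree v = k := by
      rw [hdeg v]
      have h1 : (H.edges.filter fun e => v ∈ e) = ∅ := by
        rw [Finset.filter_eq_empty_iff]
        intro e he
        exact fun hve => hv ((huni e he).1 hve)
      have h2 : (E.filter fun e => v ∈ e) = E :=
        Finset.filter_true_of_mem fun e he => (hEe e he).1
      show (H.edges.filter fun e => v ∈ e).card + _ = k
      rw [h1, h2, Finset.card_empty, hEcard, Nat.zero_add]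
    refine ⟨?_, ?_, Or.inr ⟨⟨v, Finset.mem_insert_self v H.verts, hdegv⟩, ?_⟩⟩
    · intro e he
      rcases Finset.mem_union.1 he with h | h
      · exact ⟨((huni e h).1).trans (Finset.subset_insert v H.verts), (huni e h).2⟩
      · exact ⟨(hEe e h).2.1, (hEe e h).2.2⟩
    · show t ≤ (insert v H.verts).card
      rw [Finset.card_insert_of_notMem hv]
      omega
    · intro u hu
      rcases Finset.mem_insert.1 hu with h | h
      · rw [h, hdegv]
      · rw [hdeg u]
        rcases hdisj with ⟨hct, hedges⟩ | ⟨_, hlb⟩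
        · -- previous hypergraph is the base complete one
          have hdu : H.degree u = (t - 1).choose (r - 1) := by
            show (H.edges.filter fun e => u ∈ e).card = _
            rw [hedges, count_powersetCard_mem H.verts u h r (by omega), hct]
          have havoid : (E.filter fun e => u ∉ e).card ≤ (t - 1).choose (r - 1) := by
            have := count_avoid_le E H.verts v u r hv h hEe
            rwa [hct] at this
          have hsplit : (E.filter fun e => u ∈ e).card
              + (E.filter fun e => u ∉ e).card = k := by
            rw [Finset.card_filter_add_card_filter_not, hEcard]
          rw [hdu]
          omega
        · have := hlb u h
          omega

/-- Let `k, r ≥ 2`, `t = t(k,r)`, and `n ≥ t` if `C(t-1,r-1) = k`,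
`n ≥ t+1` if `C(t-1,r-1) < k`. Then every `H ∈ M(n;k,r)` has minimum degree `δ(H) = k`. -/
theorem MFamily_minDegree {α : Type*} [DecidableEq α] (k r t n : ℕ)
    (hk : 2 ≤ k) (hr : 2 ≤ r)
    (ht1 : (t - 1).choose (r - 1) ≤ k) (ht2 : k < t.choose (r - 1))
    (hn1 : (t - 1).choose (r - 1) = k → t ≤ n)
    (hn2 : (t - 1).choose (r - 1) < k → t + 1 ≤ n)
    (H : FinHypergraph α) (hH : FinHypergraph.MFamily k r t H) (hn : H.verts.card = n) :
    H.minDegree = k := by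
  obtain ⟨huni, hcard, hdisj⟩ := MFamily_invariant k r t hr ht1 H hH
  have ht0 : 1 ≤ t := by
    by_contra h
    push_neg at h
    interval_cases t
    rw [Nat.choose_eq_zero_of_lt (by omega)] at ht2
    omega
  have hVne : H.verts.Nonempty := Finset.card_pos.1 (by omega)
  -- reduce to: all degrees ≥ k, and some vertex of degree exactly k
  suffices h : (∃ v ∈ H.verts, H.degree v = k) ∧ ∀ v ∈ H.verts, k ≤ H.degree v by
    obtain ⟨⟨v, hv, hdv⟩, hlb⟩ := h
    have hmem : k ∈ {d : ℕ | ∃ v ∈ H.verts, d = H.degree v} := ⟨v, hv, hdv.symm⟩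
    apply le_antisymm (Nat.sInf_le hmem)
    apply le_csInf ⟨k, hmem⟩
    rintro d ⟨u, hu, rfl⟩
    exact hlb u hu
  rcases hdisj with ⟨hct, hedges⟩ | h
  · -- H is the base complete r-uniform hypergraph on t vertices; then n = t
    have hck : (t - 1).choose (r - 1) = k := by
      rcases lt_or_eq_of_le ht1 with hlt | heq
      · exact absurd (hn2 hlt) (by omega)
      · exact heq
    have hdeg : ∀ u ∈ H.verts, H.degree u = k := by
      intro u hu
      show (H.edges.filter fun e => u ∈ e).card = k
      rw [hedges, count_powersetCard_mem H.verts u hu r (by omega), hct, hck]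
    obtain ⟨v, hv⟩ := hVne
    exact ⟨⟨v, hv, hdeg v hv⟩, fun u hu => (hdeg u hu).ge⟩
  · exact h
end

section
/- Let k and r be integers with k ≥ 2 and r ≥ 2, and let t = t(k,r). Assume n ≥ t if C(t−1,r−1) = k, and n ≥ t+1 if C(t−1,r−1) < k. Then every hypergraph H in the family M(n;k,r) is super-edge-connected, i.e., every minimum edge-cut of H is the set of edges incident with a single vertex. -/
section AuxNat

lemma vand3 (a b r j : ℕ) (hj1 : 1 ≤ j) (hjr : j < r) :
    a.choose r + b.choose r + a.choose j * b.choose (r - j) ≤ (a + b).choose r := by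
  rw [Nat.add_choose_eq]
  have hne1 : ((r, 0) : ℕ × ℕ) ≠ (0, r) := fun h => by rw [Prod.mk.injEq] at h; omega
  have hne2 : ((r, 0) : ℕ × ℕ) ≠ (j, r - j) := fun h => by rw [Prod.mk.injEq] at h; omega
  have hne3 : ((0, r) : ℕ × ℕ) ≠ (j, r - j) := fun h => by rw [Prod.mk.injEq] at h; omega
  have hsub : ({(r, 0), (0, r), (j, r - j)} : Finset (ℕ × ℕ)) ⊆ Finset.HasAntidiagonal.antidiagonal r := by
    intro x hx
    simp only [Finset.mem_insert, Finset.mem_singleton] at hx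
    rcases hx with rfl | rfl | rfl <;> simp [Finset.mem_antidiagonal] <;> omega
  calc a.choose r + b.choose r + a.choose j * b.choose (r - j)
      = ∑ ij ∈ ({(r, 0), (0, r), (j, r - j)} : Finset (ℕ × ℕ)), a.choose ij.1 * b.choose ij.2 := by
        rw [Finset.sum_insert (by simp [hne1, hne2]), Finset.sum_insert (by simp [hne3]),
          Finset.sum_singleton]
        simp only [Nat.choose_zero_right, mul_one, one_mul]
        ring
    _ ≤ ∑ ij ∈ Finset.HasAntidiagonal.antidiagonal r, a.choose ij.1 * b.choose ij.2 :=
        Finset.sum_le_sum_of_subset hsub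

lemma lemK' (r : ℕ) (hr : 2 ≤ r) :
    ∀ a, 2 ≤ a → ∀ b, a ≤ b → r + 1 ≤ a + b →
      a.choose r + b.choose r + 1 ≤ (a + b - 1).choose r := by
  intro a ha
  induction a, ha using Nat.le_induction with
  | base =>
    intro b hab hrb
    obtain ⟨r', rfl⟩ : ∃ r', r = r' + 1 := ⟨r - 1, by omega⟩
    have hb1 : 2 + b - 1 = b + 1 := by omega
    rw [hb1]
    have hpas : (b + 1).choose (r' + 1) = b.choose r' + b.choose (r' + 1) :=
      Nat.choose_succ_succ b r'
    have hkey : Nat.choose 2 (r' + 1) + 1 ≤ b.choose r' := by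
      rcases eq_or_lt_of_le (show 1 ≤ r' by omega) with h1 | h1
      · rw [← h1]
        simp [Nat.choose_one_right]
        omega
      · have h0 : Nat.choose 2 (r' + 1) = 0 := Nat.choose_eq_zero_of_lt (by omega)
        have hp : 0 < b.choose r' := Nat.choose_pos (by omega)
        omega
    omega
  | succ a ha ih =>
    intro b hab hrb
    have h1 : (a + 1).choose r = a.choose r + a.choose (r - 1) := by
      obtain ⟨r', rfl⟩ : ∃ r', r = r' + 1 := ⟨r - 1, by omega⟩
      simpa [add_comm] using Nat.choose_succ_succ a r'
    have h2 : (b + 1).choose r = b.choose r + b.choose (r - 1) := by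
      obtain ⟨r', rfl⟩ : ∃ r', r = r' + 1 := ⟨r - 1, by omega⟩
      simpa [add_comm] using Nat.choose_succ_succ b r'
    have h3 : a.choose (r - 1) ≤ b.choose (r - 1) := Nat.choose_mono _ (by omega)
    have h4 := ih (b + 1) (by omega) (by omega)
    have h5 : a + (b + 1) - 1 = a + 1 + b - 1 := by omega
    rw [h5] at h4
    omega

lemma lemK (r a b : ℕ) (hr : 2 ≤ r) (ha : 2 ≤ a) (hb : 2 ≤ b) (hrab : r + 1 ≤ a + b) :
    a.choose r + b.choose r + 1 ≤ (a + b - 1).choose r := by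
  rcases le_total a b with h | h
  · exact lemK' r hr a ha b h hrab
  · have := lemK' r hr b hb a h (by omega)
    rw [add_comm b a] at this
    omega

end AuxNat

section AuxFinset
variable {α : Type*} [DecidableEq α]

lemma filter_subset_powersetCard (r : ℕ) (V Y : Finset α) (hYV : Y ⊆ V) :
    (V.powersetCard r).filter (fun e => e ⊆ Y) = Y.powersetCard r := by
  ext e
  simp only [Finset.mem_filter, Finset.mem_powersetCard]
  exact ⟨fun h => ⟨h.2, h.1.2⟩, fun h => ⟨⟨h.1.trans hYV, h.2⟩, h.1⟩⟩

lemma base_cut_card (r : ℕ) (hr : 1 ≤ r) (V Y : Finset α) (hYV : Y ⊆ V) :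
    ((V.powersetCard r).filter
        (fun e => (e ∩ Y).Nonempty ∧ (e ∩ (V \ Y)).Nonempty)).card
      + Y.card.choose r + (V \ Y).card.choose r = V.card.choose r := by
  have hsplit := Finset.card_filter_add_card_filter_not
    (s := V.powersetCard r) (fun e => (e ∩ Y).Nonempty ∧ (e ∩ (V \ Y)).Nonempty)
  have hcongr : (V.powersetCard r).filter
      (fun e => ¬((e ∩ Y).Nonempty ∧ (e ∩ (V \ Y)).Nonempty))
      = (V.powersetCard r).filter (fun e => e ⊆ Y ∨ e ⊆ V \ Y) := by
    apply Finset.filter_congr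
    intro e he
    rw [Finset.mem_powersetCard] at he
    obtain ⟨heV, hec⟩ := he
    simp only [not_and_or, Finset.not_nonempty_iff_eq_empty,
      ← Finset.disjoint_iff_inter_eq_empty]
    constructor
    · rintro (h | h)
      · exact Or.inr (Finset.subset_sdiff.mpr ⟨heV, h⟩)
      · refine Or.inl (fun x hx => ?_)
        have hxV := heV hx
        by_contra hxY
        exact (Finset.disjoint_left.mp h hx) (Finset.mem_sdiff.mpr ⟨hxV, hxY⟩)
    · rintro (h | h)
      · exact Or.inr (Finset.disjoint_left.mpr
          fun x hx hxs => (Finset.mem_sdiff.mp hxs).2 (h hx))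
      · exact Or.inl (Finset.disjoint_left.mpr
          fun x hx hxY => (Finset.mem_sdiff.mp (h hx)).2 hxY)
  have hor : ((V.powersetCard r).filter (fun e => e ⊆ Y ∨ e ⊆ V \ Y)).card
      = Y.card.choose r + (V \ Y).card.choose r := by
    rw [Finset.filter_or]
    rw [Finset.card_union_of_disjoint]
    · rw [filter_subset_powersetCard r V Y hYV,
        filter_subset_powersetCard r V (V \ Y) (Finset.sdiff_subset),
        Finset.card_powersetCard, Finset.card_powersetCard]
    · rw [Finset.disjoint_left]
      intro e h1 h2
      rw [Finset.mem_filter] at h1 h2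
      have he : e ⊆ Y ∩ (V \ Y) := Finset.subset_inter h1.2 h2.2
      rw [Finset.inter_sdiff_self] at he
      have he0 : e = ∅ := Finset.subset_empty.mp he
      have hc := (Finset.mem_powersetCard.mp h1.1).2
      rw [he0, Finset.card_empty] at hc
      omega
  rw [hcongr, hor] at hsplit
  rw [Finset.card_powersetCard] at hsplit
  omega

lemma powerset_mem_card_ge (r : ℕ) (hr : 1 ≤ r) (V : Finset α) (u : α) (hu : u ∈ V) :
    (V.card - 1).choose (r - 1) ≤ ((V.powersetCard r).filter (fun e => u ∈ e)).card := by
  rw [← Finset.card_erase_of_mem hu, ← Finset.card_powersetCard (r - 1) (V.erase u)]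
  apply Finset.card_le_card_of_injOn (fun S => insert u S)
  · intro S hS
    rw [Finset.mem_coe, Finset.mem_powersetCard] at hS
    obtain ⟨hSsub, hScard⟩ := hS
    have huS : u ∉ S := fun h => (Finset.mem_erase.mp (hSsub h)).1 rfl
    rw [Finset.mem_coe, Finset.mem_filter, Finset.mem_powersetCard]
    refine ⟨⟨Finset.insert_subset hu (hSsub.trans (Finset.erase_subset _ _)), ?_⟩,
      Finset.mem_insert_self u S⟩
    rw [Finset.card_insert_of_notMem huS]; omega
  · intro S1 h1 S2 h2 heq
    rw [Finset.mem_coe, Finset.mem_powersetCard] at h1 h2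
    have hu1 : u ∉ S1 := fun h => (Finset.mem_erase.mp (h1.1 h)).1 rfl
    have hu2 : u ∉ S2 := fun h => (Finset.mem_erase.mp (h2.1 h)).1 rfl
    calc S1 = (insert u S1).erase u := (Finset.erase_insert hu1).symm
      _ = (insert u S2).erase u := by
            have heq' : insert u S1 = insert u S2 := heq
            rw [heq']
      _ = S2 := Finset.erase_insert hu2

lemma powerset_mem_card_le (r : ℕ) (V : Finset α) (u : α) :
    ((V.powersetCard r).filter (fun e => u ∈ e)).card ≤ (V.card - 1).choose (r - 1) := by
  by_cases hu : u ∈ V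
  · rw [← Finset.card_erase_of_mem hu, ← Finset.card_powersetCard (r - 1) (V.erase u)]
    apply Finset.card_le_card_of_injOn (fun e => e.erase u)
    · intro e he
      rw [Finset.mem_coe, Finset.mem_filter, Finset.mem_powersetCard] at he
      obtain ⟨⟨hsub, hcard⟩, hue⟩ := he
      rw [Finset.mem_coe, Finset.mem_powersetCard]
      constructor
      · exact Finset.erase_subset_erase u hsub
      · rw [Finset.card_erase_of_mem hue, hcard]
    · intro e1 h1 e2 h2 heq
      rw [Finset.mem_coe, Finset.mem_filter] at h1 h2
      calc e1 = insert u (e1.erase u) := (Finset.insert_erase h1.2).symm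
        _ = insert u (e2.erase u) := by
              have heq' : e1.erase u = e2.erase u := heq
              rw [heq']
        _ = e2 := Finset.insert_erase h2.2
  · have h0 : (V.powersetCard r).filter (fun e => u ∈ e) = ∅ := by
      rw [Finset.filter_eq_empty_iff]
      intro e he hue
      exact hu ((Finset.mem_powersetCard.mp he).1 hue)
    rw [h0]
    simp

end AuxFinset

namespace FinHypergraph
variable {α : Type*} [DecidableEq α]

lemma cut_def (H : FinHypergraph α) (Y : Finset α) :
    H.cut Y = H.edges.filter
      (fun e => (e ∩ Y).Nonempty ∧ (e ∩ (H.verts \ Y)).Nonempty) := rfl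

lemma cut_sdiff (H : FinHypergraph α) (hU : ∀ e ∈ H.edges, e ⊆ H.verts)
    (Y : Finset α) (hY : Y ⊆ H.verts) :
    H.cut (H.verts \ Y) = H.cut Y := by
  rw [cut_def, cut_def]
  apply Finset.filter_congr
  intro e he
  have h1 : H.verts \ (H.verts \ Y) = Y := Finset.sdiff_sdiff_eq_self hY
  rw [h1]
  exact and_comm

end FinHypergraph

lemma t_ge_r (k r t : ℕ) (hk : 2 ≤ k) (ht2 : k < t.choose (r - 1)) : r ≤ t := by
  by_contra h
  push_neg at h
  have h1 : t.choose (r - 1) ≤ 1 := by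
    rcases lt_or_ge t (r - 1) with h' | h'
    · simp [Nat.choose_eq_zero_of_lt h']
    · have ht : t = r - 1 := by omega
      rw [ht, Nat.choose_self]
  omega

lemma mfamily_main {α : Type*} [DecidableEq α] (k r t : ℕ)
    (hk : 2 ≤ k) (hr : 2 ≤ r)
    (ht1 : (t - 1).choose (r - 1) ≤ k) (ht2 : k < t.choose (r - 1))
    {H : FinHypergraph α} (hH : FinHypergraph.MFamily k r t H) :
    (∀ e ∈ H.edges, e ⊆ H.verts ∧ e.card = r) ∧
    t ≤ H.verts.card ∧
    (∀ u ∈ H.verts, (t - 1).choose (r - 1) ≤ (H.edges.filter (fun e => u ∈ e)).card) ∧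
    (∃ u ∈ H.verts, (H.cut {u}).card ≤ k) ∧
    ((H.verts.card = t ∧ H.edges = H.verts.powersetCard r) ∨
      (∀ Y ⊆ H.verts, 2 ≤ Y.card → 2 ≤ (H.verts \ Y).card → k + 1 ≤ (H.cut Y).card)) := by
  have htr : r ≤ t := t_ge_r k r t hk ht2
  have hdpos : 1 ≤ (t - 1).choose (r - 1) := Nat.choose_pos (by omega)
  induction hH with
  | base V hV =>
    constructor
    · intro e he
      rw [Finset.mem_powersetCard] at he
      exact he
    refine ⟨by simp [hV], ?_, ?_, Or.inl ⟨hV, rfl⟩⟩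
    · intro u hu
      have := powerset_mem_card_ge r (by omega) V u hu
      rw [hV] at this
      exact this
    · have hVne : V.Nonempty := Finset.card_pos.mp (by omega)
      obtain ⟨u, hu⟩ := hVne
      refine ⟨u, hu, ?_⟩
      have hsub : (FinHypergraph.cut ⟨V, V.powersetCard r⟩ {u} : Finset (Finset α))
          ⊆ (V.powersetCard r).filter (fun e => u ∈ e) := by
        intro e he
        rw [FinHypergraph.cut_def, Finset.mem_filter] at he
        obtain ⟨heP, ⟨x, hx⟩, _⟩ := he
        rw [Finset.mem_inter, Finset.mem_singleton] at hx
        rw [Finset.mem_filter]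
        exact ⟨heP, hx.2 ▸ hx.1⟩
      calc (FinHypergraph.cut ⟨V, V.powersetCard r⟩ {u} : Finset (Finset α)).card
          ≤ ((V.powersetCard r).filter (fun e => u ∈ e)).card := Finset.card_le_card hsub
        _ ≤ (V.card - 1).choose (r - 1) := powerset_mem_card_le r V u
        _ ≤ k := by rw [hV]; exact ht1
  | step H v E hM hv hE hprop ih =>
    obtain ⟨hU, hcard, hD, _hC, hBP⟩ := ih
    set G : FinHypergraph α := ⟨insert v H.verts, H.edges ∪ E⟩ with hG
    have hGverts : G.verts = insert v H.verts := rfl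
    have hGedges : G.edges = H.edges ∪ E := rfl
    have hUG : ∀ e ∈ G.edges, e ⊆ G.verts ∧ e.card = r := by
      intro e he
      rw [hGedges, Finset.mem_union] at he
      rcases he with he | he
      · exact ⟨(hU e he).1.trans (Finset.subset_insert v H.verts), (hU e he).2⟩
      · exact ⟨(hprop e he).2.1, (hprop e he).2.2⟩
    have hGcard : G.verts.card = H.verts.card + 1 := by
      rw [hGverts, Finset.card_insert_of_notMem hv]
    refine ⟨hUG, by omega, ?_, ?_, Or.inr ?_⟩
    · -- degrees
      intro u hu
      rw [hGverts, Finset.mem_insert] at hu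
      rcases hu with rfl | hu
      · have hsub : E ⊆ G.edges.filter (fun e => u ∈ e) := by
          intro e he
          rw [Finset.mem_filter, hGedges]
          exact ⟨Finset.mem_union_right _ he, (hprop e he).1⟩
        calc (t - 1).choose (r - 1) ≤ k := ht1
          _ = E.card := hE.symm
          _ ≤ _ := Finset.card_le_card hsub
      · calc (t - 1).choose (r - 1) ≤ (H.edges.filter (fun e => u ∈ e)).card := hD u hu
          _ ≤ (G.edges.filter (fun e => u ∈ e)).card := by
              apply Finset.card_le_card
              apply Finset.filter_subset_filter
              rw [hGedges]
              exact Finset.subset_union_left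
    · -- a vertex with small cut
      refine ⟨v, by rw [hGverts]; exact Finset.mem_insert_self v H.verts, ?_⟩
      have hsub : G.cut {v} ⊆ E := by
        intro e he
        rw [FinHypergraph.cut_def, Finset.mem_filter] at he
        obtain ⟨heP, ⟨x, hx⟩, _⟩ := he
        rw [Finset.mem_inter, Finset.mem_singleton] at hx
        have hve : v ∈ e := hx.2 ▸ hx.1
        rw [hGedges, Finset.mem_union] at heP
        rcases heP with he' | he'
        · exact absurd ((hU e he').1 hve) hv
        · exact he'
      calc (G.cut {v}).card ≤ E.card := Finset.card_le_card hsub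
        _ = k := hE
    · -- the main cut bound
      suffices key : ∀ Y ⊆ G.verts, 2 ≤ Y.card → 2 ≤ (G.verts \ Y).card → v ∉ Y →
          k + 1 ≤ (G.cut Y).card by
        intro Y hY h2 h2'
        by_cases hvY : v ∈ Y
        · rw [← FinHypergraph.cut_sdiff G (fun e he => (hUG e he).1) Y hY]
          refine key _ (Finset.sdiff_subset) h2' ?_ ?_
          · rw [Finset.sdiff_sdiff_eq_self hY]; exact h2
          · exact fun hmem => (Finset.mem_sdiff.mp hmem).2 hvY
        · exact key Y hY h2 h2' hvY
      intro Y hYW h2Y h2c hvY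
      have hYV : Y ⊆ H.verts := by
        intro x hx
        have := hYW hx
        rw [hGverts, Finset.mem_insert] at this
        rcases this with rfl | h
        · exact absurd hx hvY
        · exact h
      have hWY : G.verts \ Y = insert v (H.verts \ Y) := by
        rw [hGverts, Finset.insert_sdiff_of_notMem _ hvY]
      have hvB : v ∉ H.verts \ Y := fun h => hv (Finset.mem_sdiff.mp h).1
      have hbc : (G.verts \ Y).card = (H.verts \ Y).card + 1 := by
        rw [hWY, Finset.card_insert_of_notMem hvB]
      have hb1 : 1 ≤ (H.verts \ Y).card := by omega
      -- decompose the cut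
      have hsplit : (G.cut Y).card = (H.cut Y).card
          + (E.filter (fun e => (e ∩ Y).Nonempty)).card := by
        rw [FinHypergraph.cut_def, hGedges, Finset.filter_union]
        have hold : H.edges.filter
            (fun e => (e ∩ Y).Nonempty ∧ (e ∩ (G.verts \ Y)).Nonempty) = H.cut Y := by
          rw [FinHypergraph.cut_def]
          apply Finset.filter_congr
          intro e he
          have hve : v ∉ e := fun h => hv ((hU e he).1 h)
          have hinter : e ∩ (G.verts \ Y) = e ∩ (H.verts \ Y) := by
            rw [hWY]
            ext x
            simp only [Finset.mem_inter, Finset.mem_insert]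
            constructor
            · rintro ⟨hxe, (rfl | hxB)⟩
              · exact absurd hxe hve
              · exact ⟨hxe, hxB⟩
            · rintro ⟨hxe, hxB⟩
              exact ⟨hxe, Or.inr hxB⟩
          rw [hinter]
        have hnew : E.filter
            (fun e => (e ∩ Y).Nonempty ∧ (e ∩ (G.verts \ Y)).Nonempty)
            = E.filter (fun e => (e ∩ Y).Nonempty) := by
          apply Finset.filter_congr
          intro e he
          have hvmem : v ∈ e ∩ (G.verts \ Y) := by
            rw [Finset.mem_inter, hWY]
            exact ⟨(hprop e he).1, Finset.mem_insert_self v _⟩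
          exact ⟨fun h => h.1, fun h => ⟨h, ⟨v, hvmem⟩⟩⟩
        rw [hold, hnew]
        apply Finset.card_union_of_disjoint
        rw [Finset.disjoint_left]
        intro e h1 h2
        rw [FinHypergraph.cut_def, Finset.mem_filter] at h1
        rw [Finset.mem_filter] at h2
        exact hv ((hU e h1.1).1 ((hprop e h2.1).1))
      -- the number of new edges avoiding Y is at most C(b, r-1)
      have havoid : (E.filter (fun e => ¬(e ∩ Y).Nonempty)).card
          ≤ (H.verts \ Y).card.choose (r - 1) := by
        rw [← Finset.card_powersetCard (r - 1) (H.verts \ Y)]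
        apply Finset.card_le_card_of_injOn (fun e => e.erase v)
        · intro e he
          rw [Finset.mem_coe, Finset.mem_filter] at he
          obtain ⟨heE, hnY⟩ := he
          obtain ⟨hve, hesub, hecard⟩ := hprop e heE
          rw [Finset.mem_coe, Finset.mem_powersetCard]
          constructor
          · intro x hx
            rw [Finset.mem_erase] at hx
            obtain ⟨hxv, hxe⟩ := hx
            have hxV : x ∈ H.verts := by
              have := hesub hxe
              rw [Finset.mem_insert] at this
              rcases this with rfl | h
              · exact absurd rfl hxv
              · exact h
            rw [Finset.mem_sdiff]
            exact ⟨hxV, fun hxY => hnY ⟨x, Finset.mem_inter.mpr ⟨hxe, hxY⟩⟩⟩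
          · rw [Finset.card_erase_of_mem hve, hecard]
        · intro e1 h1 e2 h2 heq
          rw [Finset.mem_coe, Finset.mem_filter] at h1 h2
          calc e1 = insert v (e1.erase v) := (Finset.insert_erase (hprop e1 h1.1).1).symm
            _ = insert v (e2.erase v) := by
                  have heq' : e1.erase v = e2.erase v := heq
                  rw [heq']
            _ = e2 := Finset.insert_erase (hprop e2 h2.1).1
      have hEsplit : (E.filter (fun e => (e ∩ Y).Nonempty)).card
          + (E.filter (fun e => ¬(e ∩ Y).Nonempty)).card = k := by
        rw [Finset.card_filter_add_card_filter_not, hE]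
      rw [hsplit]
      rcases eq_or_lt_of_le hb1 with hbeq | hb2
      · -- b = 1 : the old part is the cut around a single old vertex
        obtain ⟨u, hBu⟩ := Finset.card_eq_one.mp hbeq.symm
        have huB : u ∈ H.verts \ Y := hBu ▸ Finset.mem_singleton_self u
        have huV : u ∈ H.verts := (Finset.mem_sdiff.mp huB).1
        have hsub2 : H.edges.filter (fun e => u ∈ e) ⊆ H.cut Y := by
          intro e he
          rw [Finset.mem_filter] at he
          obtain ⟨heE, hue⟩ := he
          rw [FinHypergraph.cut_def, Finset.mem_filter]
          refine ⟨heE, ?_, ⟨u, Finset.mem_inter.mpr ⟨hue, huB⟩⟩⟩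
          have hecard : e.card = r := (hU e heE).2
          obtain ⟨x, hxe, hxu⟩ := Finset.exists_mem_ne (s := e) (by omega) u
          have hxV : x ∈ H.verts := (hU e heE).1 hxe
          have hxY : x ∈ Y := by
            by_contra hxY
            have hxB : x ∈ H.verts \ Y := Finset.mem_sdiff.mpr ⟨hxV, hxY⟩
            rw [hBu, Finset.mem_singleton] at hxB
            exact hxu hxB
          exact ⟨x, Finset.mem_inter.mpr ⟨hxe, hxY⟩⟩
        have hcut1 : (t - 1).choose (r - 1) ≤ (H.cut Y).card :=
          le_trans (hD u huV) (Finset.card_le_card hsub2)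
        have hav1 : (E.filter (fun e => ¬(e ∩ Y).Nonempty)).card ≤ (1 : ℕ).choose (r - 1) := by
          rwa [← hbeq] at havoid
        rcases eq_or_lt_of_le hr with hr2 | hr3
        · -- r = 2
          have hrr : r - 1 = 1 := by omega
          have hq : (1 : ℕ).choose (r - 1) = 1 := by rw [hrr]; rfl
          have hq2 : (t - 1).choose (r - 1) = t - 1 := by rw [hrr, Nat.choose_one_right]
          have hq3 : t.choose (r - 1) = t := by rw [hrr, Nat.choose_one_right]
          omega
        · -- r ≥ 3
          have h0 : (1 : ℕ).choose (r - 1) = 0 := Nat.choose_eq_zero_of_lt (by omega)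
          omega
      · -- b ≥ 2
        rcases hBP with ⟨hVt, hedges⟩ | hP
        · -- H is the complete r-uniform hypergraph on t vertices
          have hab : Y.card + (H.verts \ Y).card = t := by
            have h1 := Finset.card_sdiff_of_subset hYV
            have h2 := Finset.card_le_card hYV
            omega
          have hbase := base_cut_card r (by omega) H.verts Y hYV
          rw [hVt] at hbase
          have hcuteq : (H.cut Y).card + Y.card.choose r
              + (H.verts \ Y).card.choose r = t.choose r := by
            rw [FinHypergraph.cut_def, hedges]
            exact hbase
          have hmul : 2 * (H.verts \ Y).card.choose (r - 1) ≤ (H.cut Y).card := by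
            have hv1 := vand3 Y.card (H.verts \ Y).card r 1 le_rfl (by omega)
            rw [Nat.choose_one_right, hab] at hv1
            have h2a : 2 * (H.verts \ Y).card.choose (r - 1)
                ≤ Y.card * (H.verts \ Y).card.choose (r - 1) :=
              Nat.mul_le_mul_right _ h2Y
            omega
          have hone : 1 ≤ (H.cut Y).card := by
            obtain ⟨j, hj1, hj2, hjpos⟩ :
                ∃ j, 1 ≤ j ∧ j < r ∧
                  1 ≤ Y.card.choose j * (H.verts \ Y).card.choose (r - j) := by
              rcases le_or_gt (r - 1) (H.verts \ Y).card with hb' | hb'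
              · refine ⟨1, le_rfl, by omega, ?_⟩
                rw [Nat.choose_one_right]
                have hp : 0 < (H.verts \ Y).card.choose (r - 1) := Nat.choose_pos hb'
                have ha0 : 0 < Y.card := by omega
                exact Nat.one_le_iff_ne_zero.mpr (by positivity)
              · refine ⟨r - (H.verts \ Y).card, by omega, by omega, ?_⟩
                have h1 : r - (r - (H.verts \ Y).card) = (H.verts \ Y).card := by omega
                rw [h1, Nat.choose_self]
                have hp : 0 < Y.card.choose (r - (H.verts \ Y).card) :=
                  Nat.choose_pos (by omega)
                omega
            have hv2 := vand3 Y.card (H.verts \ Y).card r j hj1 hj2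
            rw [hab] at hv2
            omega
          omega
        · -- use the inductive cut bound
          have := hP Y hYV h2Y (by omega)
          omega

/-- Let `k, r ≥ 2`, `t = t(k,r)`, and `n ≥ t` if `C(t-1,r-1) = k`,
`n ≥ t+1` if `C(t-1,r-1) < k`. Then every `H ∈ M(n;k,r)` is super-edge-connected:
every minimum edge-cut of `H` is the set of edges incident with a single vertex. -/
theorem MFamily_super_edge_connected {α : Type*} [DecidableEq α] (k r t n : ℕ)
    (hk : 2 ≤ k) (hr : 2 ≤ r)
    (ht1 : (t - 1).choose (r - 1) ≤ k) (ht2 : k < t.choose (r - 1))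
    (hn1 : (t - 1).choose (r - 1) = k → t ≤ n)
    (hn2 : (t - 1).choose (r - 1) < k → t + 1 ≤ n)
    (H : FinHypergraph α) (hH : FinHypergraph.MFamily k r t H) (hn : H.verts.card = n) :
    ∀ X : Finset (Finset α), H.IsMinEdgeCut X → ∃ v ∈ H.verts, X = H.cut {v} := by
  intro X hX
  obtain ⟨⟨Y, hYsub, hYne, hYne', hXY⟩, hXcard⟩ := hX
  obtain ⟨hU, htcard, hD, ⟨u₀, hu₀, hu₀k⟩, hBP⟩ := mfamily_main k r t hk hr ht1 ht2 hH
  have htr : r ≤ t := t_ge_r k r t hk ht2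
  have h2card : 2 ≤ H.verts.card := le_trans (le_trans hr htr) htcard
  have hconn : H.edgeConn ≤ k := by
    refine le_trans (Nat.sInf_le ?_) hu₀k
    refine ⟨{u₀}, Finset.singleton_subset_iff.mpr hu₀, Finset.singleton_nonempty _, ?_, rfl⟩
    intro h
    rw [← h, Finset.card_singleton] at h2card
    omega
  have hXk : X.card ≤ k := by
    rw [hXcard]; exact hconn
  have hY1 : 1 ≤ Y.card := Finset.card_pos.mpr hYne
  have hZne : (H.verts \ Y).Nonempty :=
    Finset.sdiff_nonempty.mpr (fun h => hYne' (Finset.Subset.antisymm hYsub h))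
  have hZ1 : 1 ≤ (H.verts \ Y).card := Finset.card_pos.mpr hZne
  rcases eq_or_lt_of_le hY1 with h1 | h1
  · obtain ⟨u, rfl⟩ := Finset.card_eq_one.mp h1.symm
    exact ⟨u, hYsub (Finset.mem_singleton_self u), hXY⟩
  rcases eq_or_lt_of_le hZ1 with h1' | h1'
  · obtain ⟨u, hZu⟩ := Finset.card_eq_one.mp h1'.symm
    have huZ : u ∈ H.verts \ Y := hZu ▸ Finset.mem_singleton_self u
    refine ⟨u, (Finset.mem_sdiff.mp huZ).1, ?_⟩
    rw [hXY, ← FinHypergraph.cut_sdiff H (fun e he => (hU e he).1) Y hYsub, hZu]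
  · -- both sides have at least two vertices : contradiction with minimality
    exfalso
    rcases hBP with ⟨hVt, hedges⟩ | hP
    · -- H is the complete hypergraph on t vertices
      have hkt : (t - 1).choose (r - 1) = k := by
        by_contra hne
        have := hn2 (lt_of_le_of_ne ht1 hne)
        omega
      have htr1 : r + 1 ≤ t := by
        by_contra hle
        push_neg at hle
        have hle1 : (t - 1).choose (r - 1) ≤ 1 := by
          rcases lt_or_ge (t - 1) (r - 1) with h' | h'
          · simp [Nat.choose_eq_zero_of_lt h']
          · have heq : t - 1 = r - 1 := by omega
            rw [heq, Nat.choose_self]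
        omega
      have hab : Y.card + (H.verts \ Y).card = t := by
        have ha1 := Finset.card_sdiff_of_subset hYsub
        have ha2 := Finset.card_le_card hYsub
        omega
      have hbase := base_cut_card r (by omega) H.verts Y hYsub
      rw [hVt] at hbase
      have hcuteq : (H.cut Y).card + Y.card.choose r
          + (H.verts \ Y).card.choose r = t.choose r := by
        rw [FinHypergraph.cut_def, hedges]
        exact hbase
      have hK := lemK r Y.card (H.verts \ Y).card hr (by omega) (by omega) (by omega)
      rw [hab] at hK
      have hpascal : t.choose r = (t - 1).choose r + (t - 1).choose (r - 1) := by
        obtain ⟨t', rfl⟩ : ∃ t', t = t' + 1 := ⟨t - 1, by omega⟩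
        obtain ⟨r', rfl⟩ : ∃ r', r = r' + 1 := ⟨r - 1, by omega⟩
        simpa [add_comm] using Nat.choose_succ_succ t' r'
      have hXcY : X.card = (H.cut Y).card := by rw [hXY]
      omega
    · have := hP Y hYsub (by omega) (by omega)
      have hXcY : X.card = (H.cut Y).card := by rw [hXY]
      omega
end

section
/- Let k ≥ 2 be an integer and let G be a k-edge-maximal (simple) graph on n vertices with n ≥ k+1. Then |E(G)| ≤ C(k,2) + (n−k)·k, and equality |E(G)| = C(k,2) + (n−k)·k holds if and only if G belongs to the family M(n;k,2). -/
namespace FinHypergraph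

variable {α : Type*} [DecidableEq α]

lemma edgeConn_le_cut (H : FinHypergraph α) {X : Finset α} (hX : X ⊆ H.verts)
    (h1 : X.Nonempty) (h2 : X ≠ H.verts) : H.edgeConn ≤ (H.cut X).card :=
  Nat.sInf_le ⟨X, hX, h1, h2, rfl⟩

lemma cut_subset (H : FinHypergraph α) (X : Finset α) : H.cut X ⊆ H.edges :=
  Finset.filter_subset _ _

lemma edgeConn_le_card_edges (H : FinHypergraph α) : H.edgeConn ≤ H.edges.card := by
  by_cases h : {d : ℕ | ∃ X : Finset α, X ⊆ H.verts ∧ X.Nonempty ∧ X ≠ H.verts ∧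
      d = (H.cut X).card}.Nonempty
  · obtain ⟨X, _, _, _, hd⟩ := Nat.sInf_mem h
    calc H.edgeConn = (H.cut X).card := hd
      _ ≤ H.edges.card := Finset.card_le_card (cut_subset H X)
  · rw [Set.not_nonempty_iff_eq_empty] at h
    rw [edgeConn, h, Nat.sInf_empty]
    exact Nat.zero_le _

lemma strength_bddAbove (H : FinHypergraph α) :
    BddAbove {d : ℕ | ∃ H' : FinHypergraph α, H'.IsSub H ∧ d = H'.edgeConn} := by
  refine ⟨H.edges.card, fun d hd => ?_⟩
  obtain ⟨H', hsub, rfl⟩ := hd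
  exact (edgeConn_le_card_edges H').trans (Finset.card_le_card hsub.2)

lemma edgeConn_le_strength {H' H : FinHypergraph α} (h : H'.IsSub H) :
    H'.edgeConn ≤ H.strength :=
  le_csSup (strength_bddAbove H) ⟨H', h, rfl⟩

lemma strength_le_of (H : FinHypergraph α) (k : ℕ)
    (h : ∀ H' : FinHypergraph α, H'.IsSub H → H'.edgeConn ≤ k) : H.strength ≤ k := by
  refine csSup_le ⟨H.edgeConn, H, ⟨subset_rfl, subset_rfl⟩, rfl⟩ ?_
  rintro d ⟨H', hs, rfl⟩
  exact h H' hs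

lemma strength_attained (H : FinHypergraph α) :
    ∃ H' : FinHypergraph α, H'.IsSub H ∧ H'.edgeConn = H.strength := by
  have hne : {d : ℕ | ∃ H' : FinHypergraph α, H'.IsSub H ∧ d = H'.edgeConn}.Nonempty :=
    ⟨H.edgeConn, H, ⟨subset_rfl, subset_rfl⟩, rfl⟩
  obtain ⟨H', hsub, hd⟩ := Nat.sSup_mem hne (strength_bddAbove H)
  exact ⟨H', hsub, hd.symm⟩

lemma pair_eq {e : Finset α} (h : e.card = 2) {a b : α} (ha : a ∈ e) (hb : b ∈ e)
    (hab : a ≠ b) : e = {a, b} := by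
  refine (Finset.eq_of_subset_of_card_le ?_ ?_).symm
  · intro x hx
    simp only [Finset.mem_insert, Finset.mem_singleton] at hx
    rcases hx with rfl | rfl <;> assumption
  · rw [h, Finset.card_pair hab]

lemma edgeConn_eq_zero_of_small (H : FinHypergraph α) (h : H.verts.card ≤ 1) :
    H.edgeConn = 0 := by
  have : {d : ℕ | ∃ X : Finset α, X ⊆ H.verts ∧ X.Nonempty ∧ X ≠ H.verts ∧
      d = (H.cut X).card} = ∅ := by
    ext d
    simp only [Set.mem_setOf_eq, Set.mem_empty_iff_false, iff_false, not_exists]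
    rintro X ⟨hX, hne, hXv, -⟩
    exact hXv (Finset.eq_of_subset_of_card_le hX (by
      have := Finset.card_pos.mpr hne; omega))
  rw [edgeConn, this, Nat.sInf_empty]

lemma cut_singleton_card_le (H : FinHypergraph α) (h2 : ∀ e ∈ H.edges, e.card = 2)
    {v : α} (hv : v ∈ H.verts) : (H.cut {v}).card ≤ H.verts.card - 1 := by
  have hsub : H.cut {v} ⊆ (H.verts.erase v).image (fun w => insert v {w}) := by
    intro e he
    simp only [cut, Finset.mem_filter] at he
    obtain ⟨heE, ⟨x, hx⟩, ⟨w, hw⟩⟩ := he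
    simp only [Finset.mem_inter, Finset.mem_singleton] at hx
    obtain ⟨hxe, rfl⟩ := hx
    simp only [Finset.mem_inter, Finset.mem_sdiff, Finset.mem_singleton] at hw
    obtain ⟨hwe, hwV, hwx⟩ := hw
    have : e = {x, w} := pair_eq (h2 e heE) hxe hwe (fun h => hwx h.symm)
    simp only [Finset.mem_image]
    exact ⟨w, Finset.mem_erase.mpr ⟨hwx, hwV⟩, by rw [this]⟩
  calc (H.cut {v}).card ≤ ((H.verts.erase v).image (fun w => insert v {w})).card :=
        Finset.card_le_card hsub
    _ ≤ (H.verts.erase v).card := Finset.card_image_le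
    _ = H.verts.card - 1 := Finset.card_erase_of_mem hv

lemma edgeConn_le_card_verts (H : FinHypergraph α) (h2 : ∀ e ∈ H.edges, e.card = 2) :
    H.edgeConn ≤ H.verts.card - 1 := by
  rcases le_or_gt H.verts.card 1 with h | h
  · rw [edgeConn_eq_zero_of_small H h]; exact Nat.zero_le _
  · have hvne : H.verts.Nonempty := Finset.card_pos.mp (by omega)
    obtain ⟨v, hv⟩ := hvne
    have hne : ({v} : Finset α) ≠ H.verts := by
      intro heq
      have : H.verts.card = 1 := by rw [← heq, Finset.card_singleton]
      omega
    exact (edgeConn_le_cut H (Finset.singleton_subset_iff.mpr hv)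
      (Finset.singleton_nonempty v) hne).trans (cut_singleton_card_le H h2 hv)

lemma strength_le_card_verts (H : FinHypergraph α) (h2 : ∀ e ∈ H.edges, e.card = 2) :
    H.strength ≤ H.verts.card - 1 := by
  refine strength_le_of H _ (fun H' hs => ?_)
  exact (edgeConn_le_card_verts H' (fun e he => h2 e (hs.2 he))).trans
    (Nat.sub_le_sub_right (Finset.card_le_card hs.1) 1)

end FinHypergraph
namespace FinHypergraph

variable {α : Type*} [DecidableEq α]

/-- Edges not inside `S ⊇ H.verts` do not affect cuts along `X ⊆ H.verts`. -/
lemma cut_filter_eq (H : FinHypergraph α) (S : Finset α) (hv : H.verts ⊆ S)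
    (h2 : ∀ e ∈ H.edges, e.card = 2) {X : Finset α} (hX : X ⊆ H.verts) :
    FinHypergraph.cut ⟨H.verts, H.edges.filter (· ⊆ S)⟩ X = H.cut X := by
  apply Finset.Subset.antisymm
  · intro e he
    simp only [cut, Finset.mem_filter] at he ⊢
    exact ⟨he.1.1, he.2⟩
  · intro e he
    simp only [cut, Finset.mem_filter] at he ⊢
    obtain ⟨heE, ⟨a, ha⟩, ⟨b, hb⟩⟩ := he
    simp only [Finset.mem_inter] at ha
    simp only [Finset.mem_inter, Finset.mem_sdiff] at hb
    have hab : a ≠ b := fun h => hb.2.2 (h ▸ ha.2)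
    have he2 : e = {a, b} := pair_eq (h2 e heE) ha.1 hb.1 hab
    refine ⟨⟨heE, ?_⟩, ⟨a, Finset.mem_inter.mpr ha⟩,
      ⟨b, Finset.mem_inter.mpr ⟨hb.1, Finset.mem_sdiff.mpr hb.2⟩⟩⟩
    rw [he2]
    intro x hx
    simp only [Finset.mem_insert, Finset.mem_singleton] at hx
    rcases hx with rfl | rfl
    · exact hv (hX ha.2)
    · exact hv hb.2.1

lemma edgeConn_filter_eq (H : FinHypergraph α) (S : Finset α) (hv : H.verts ⊆ S)
    (h2 : ∀ e ∈ H.edges, e.card = 2) :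
    FinHypergraph.edgeConn ⟨H.verts, H.edges.filter (· ⊆ S)⟩ = H.edgeConn := by
  unfold edgeConn
  congr 1
  ext d
  constructor
  · rintro ⟨X, hX, h1, h2', hd⟩
    exact ⟨X, hX, h1, h2', by rw [hd, cut_filter_eq H S hv h2 hX]⟩
  · rintro ⟨X, hX, h1, h2', hd⟩
    exact ⟨X, hX, h1, h2', by rw [hd, cut_filter_eq H S hv h2 hX]⟩

/-- Removing an edge disjoint from the vertex set does not affect edge-connectivity. -/
lemma edgeConn_erase_eq (H : FinHypergraph α) (e : Finset α) (he : e ∩ H.verts = ∅) :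
    FinHypergraph.edgeConn ⟨H.verts, H.edges.erase e⟩ = H.edgeConn := by
  have hcut : ∀ X : Finset α,
      FinHypergraph.cut ⟨H.verts, H.edges.erase e⟩ X = H.cut X := by
    intro X
    apply Finset.Subset.antisymm
    · intro f hf
      simp only [cut, Finset.mem_filter, Finset.mem_erase] at hf ⊢
      exact ⟨hf.1.2, hf.2⟩
    · intro f hf
      simp only [cut, Finset.mem_filter, Finset.mem_erase] at hf ⊢
      refine ⟨⟨?_, hf.1⟩, hf.2⟩
      rintro rfl
      obtain ⟨b, hb⟩ := hf.2.2
      simp only [Finset.mem_inter, Finset.mem_sdiff] at hb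
      have : b ∈ f ∩ H.verts := Finset.mem_inter.mpr ⟨hb.1, hb.2.1⟩
      rw [he] at this
      exact absurd this (Finset.notMem_empty b)
  unfold edgeConn
  congr 1
  ext d
  constructor
  · rintro ⟨X, hX, h1, h2', hd⟩
    exact ⟨X, hX, h1, h2', by rw [hd, hcut X]⟩
  · rintro ⟨X, hX, h1, h2', hd⟩
    exact ⟨X, hX, h1, h2', by rw [hd, hcut X]⟩

lemma cut_sdiff_eq (H : FinHypergraph α) {S : Finset α} (hS : S ⊆ H.verts) :
    H.cut (H.verts \ S) = H.cut S := by
  have hc : H.verts \ (H.verts \ S) = S := by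
    rw [Finset.sdiff_sdiff_self_left,
      Finset.inter_eq_right.mpr hS]
  unfold cut
  rw [hc]
  ext f
  simp only [Finset.mem_filter]
  tauto

/-- Partition of the edge set along a cut. -/
lemma edges_eq_union (G : FinHypergraph α) (hu : G.IsUniform 2) {S : Finset α}
    (hS : S ⊆ G.verts) :
    G.edges = (G.induce S).edges ∪ (G.induce (G.verts \ S)).edges ∪ G.cut S := by
  apply Finset.Subset.antisymm
  · intro e he
    simp only [Finset.mem_union, induce, cut, Finset.mem_filter]
    by_cases h1 : e ⊆ S
    · exact Or.inl (Or.inl ⟨he, h1⟩)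
    by_cases h2 : e ⊆ G.verts \ S
    · exact Or.inl (Or.inr ⟨he, h2⟩)
    refine Or.inr ⟨he, ?_, ?_⟩
    · obtain ⟨b, hbe, hbS⟩ := Finset.not_subset.mp h2
      have hbv : b ∈ G.verts := (hu e he).1 hbe
      have hbS' : b ∈ S := by
        by_contra hb
        exact hbS (Finset.mem_sdiff.mpr ⟨hbv, hb⟩)
      exact ⟨b, Finset.mem_inter.mpr ⟨hbe, hbS'⟩⟩
    · obtain ⟨a, hae, haS⟩ := Finset.not_subset.mp h1
      exact ⟨a, Finset.mem_inter.mpr ⟨hae, Finset.mem_sdiff.mpr ⟨(hu e he).1 hae, haS⟩⟩⟩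
  · intro e he
    simp only [Finset.mem_union, induce, cut, Finset.mem_filter] at he
    tauto

lemma disj_induce (G : FinHypergraph α) (hu : G.IsUniform 2) {S : Finset α} :
    Disjoint (G.induce S).edges (G.induce (G.verts \ S)).edges := by
  rw [Finset.disjoint_left]
  intro e h1 h2
  simp only [induce, Finset.mem_filter] at h1 h2
  have hcard := (hu e h1.1).2
  have : e = ∅ := by
    apply Finset.eq_empty_of_forall_notMem
    intro x hx
    exact (Finset.mem_sdiff.mp (h2.2 hx)).2 (h1.2 hx)
  rw [this] at hcard
  simp at hcard

lemma disj_cut (G : FinHypergraph α) {S : Finset α} :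
    Disjoint ((G.induce S).edges ∪ (G.induce (G.verts \ S)).edges) (G.cut S) := by
  rw [Finset.disjoint_left]
  intro e h1 h2
  simp only [Finset.mem_union, induce, Finset.mem_filter] at h1
  simp only [cut, Finset.mem_filter] at h2
  rcases h1 with ⟨-, hsub⟩ | ⟨-, hsub⟩
  · obtain ⟨b, hb⟩ := h2.2.2
    simp only [Finset.mem_inter, Finset.mem_sdiff] at hb
    exact hb.2.2 (hsub hb.1)
  · obtain ⟨a, ha⟩ := h2.2.1
    simp only [Finset.mem_inter] at ha
    exact (Finset.mem_sdiff.mp (hsub ha.1)).2 ha.2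

lemma card_edges_split (G : FinHypergraph α) (hu : G.IsUniform 2) {S : Finset α}
    (hS : S ⊆ G.verts) :
    G.edges.card = (G.induce S).edges.card + (G.induce (G.verts \ S)).edges.card
      + (G.cut S).card := by
  rw [edges_eq_union G hu hS, Finset.card_union_of_disjoint (disj_cut G),
    Finset.card_union_of_disjoint (disj_induce G hu)]

/-- An edge-maximal graph on at most `k+1` vertices is complete. -/
lemma complete_of_small (G : FinHypergraph α) (k : ℕ) (hG : G.IsEdgeMaximal k 2)
    (hc : G.verts.card ≤ k + 1) : G.edges = G.verts.powersetCard 2 := by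
  apply Finset.Subset.antisymm
  · intro e he
    rw [Finset.mem_powersetCard]
    exact hG.1 e he
  · intro e he
    rw [Finset.mem_powersetCard] at he
    by_contra hne
    have hstr := hG.2.2 e he.1 he.2 hne
    have h2 : ∀ f ∈ (G.addEdge e).edges, f.card = 2 := by
      intro f hf
      simp only [addEdge, Finset.mem_insert] at hf
      rcases hf with rfl | hf
      · exact he.2
      · exact (hG.1 f hf).2
    have := strength_le_card_verts (G.addEdge e) h2
    simp only [addEdge] at this hstr
    omega

end FinHypergraph
namespace FinHypergraph

variable {α : Type*} [DecidableEq α]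

lemma induce_edgeMaximal (G : FinHypergraph α) (k : ℕ) (hG : G.IsEdgeMaximal k 2)
    {S : Finset α} (hS : S ⊆ G.verts) (hcut : (G.cut S).card ≤ k) :
    (G.induce S).IsEdgeMaximal k 2 := by
  obtain ⟨hu, hstr, hmax⟩ := hG
  refine ⟨?_, ?_, ?_⟩
  · intro e he
    simp only [induce, Finset.mem_filter] at he
    exact ⟨he.2, (hu e he.1).2⟩
  · refine strength_le_of _ _ (fun H' hs => ?_)
    refine le_trans (edgeConn_le_strength (H := G) ⟨hs.1.trans hS, ?_⟩) hstr
    exact hs.2.trans (Finset.filter_subset _ _)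
  · intro e heS he2 hne
    have heG : e ∉ G.edges := fun h =>
      hne (by simp only [induce, Finset.mem_filter]; exact ⟨h, heS⟩)
    have hstr' := hmax e (heS.trans hS) he2 heG
    obtain ⟨H', hsub, hconn⟩ := strength_attained (G.addEdge e)
    have hkc : k + 1 ≤ H'.edgeConn := by omega
    have hvG : H'.verts ⊆ G.verts := hsub.1
    have heH' : e ∈ H'.edges := by
      by_contra hmem
      have hsubG : H'.IsSub G := by
        refine ⟨hvG, fun f hf => ?_⟩
        have := hsub.2 hf
        simp only [addEdge, Finset.mem_insert] at this
        rcases this with rfl | h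
        · exact absurd hf hmem
        · exact h
      have := edgeConn_le_strength hsubG
      omega
    have h2' : ∀ f ∈ H'.edges, f.card = 2 := by
      intro f hf
      have := hsub.2 hf
      simp only [addEdge, Finset.mem_insert] at this
      rcases this with rfl | h
      · exact he2
      · exact (hu f h).2
    by_cases hX : H'.verts ∩ S = H'.verts
    · -- H' lives inside S
      have hvs : H'.verts ⊆ S := by
        intro x hx
        have : x ∈ H'.verts ∩ S := hX.symm ▸ hx
        exact (Finset.mem_inter.mp this).2
      have hconn'' : FinHypergraph.edgeConn ⟨H'.verts, H'.edges.filter (· ⊆ S)⟩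
          = H'.edgeConn := edgeConn_filter_eq H' S hvs h2'
      have hsub'' : FinHypergraph.IsSub ⟨H'.verts, H'.edges.filter (· ⊆ S)⟩
          ((G.induce S).addEdge e) := by
        constructor
        · exact hvs
        · intro f hf
          simp only [Finset.mem_filter] at hf
          have := hsub.2 hf.1
          simp only [addEdge, Finset.mem_insert, induce, Finset.mem_filter] at this ⊢
          rcases this with rfl | h
          · exact Or.inl rfl
          · exact Or.inr ⟨h, hf.2⟩
      have := edgeConn_le_strength hsub''
      omega
    · by_cases hX0 : H'.verts ∩ S = ∅
      · -- H' avoids S entirely; delete e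
        have hint : e ∩ H'.verts = ∅ := by
          apply Finset.eq_empty_of_forall_notMem
          intro x hx
          simp only [Finset.mem_inter] at hx
          have : x ∈ H'.verts ∩ S := Finset.mem_inter.mpr ⟨hx.2, heS hx.1⟩
          rw [hX0] at this
          exact Finset.notMem_empty x this
        have hconn'' := edgeConn_erase_eq H' e hint
        have hsubG : FinHypergraph.IsSub ⟨H'.verts, H'.edges.erase e⟩ G := by
          refine ⟨hvG, fun f hf => ?_⟩
          simp only [Finset.mem_erase] at hf
          have := hsub.2 hf.2
          simp only [addEdge, Finset.mem_insert] at this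
          rcases this with rfl | h
          · exact absurd rfl hf.1
          · exact h
        have := edgeConn_le_strength hsubG
        omega
      · -- the cut of H' along H'.verts ∩ S embeds into G.cut S : contradiction
        have hne0 : (H'.verts ∩ S).Nonempty := Finset.nonempty_iff_ne_empty.mpr hX0
        have hsubcut : H'.cut (H'.verts ∩ S) ⊆ G.cut S := by
          intro f hf
          simp only [cut, Finset.mem_filter] at hf ⊢
          obtain ⟨hfE, ⟨a, ha⟩, ⟨b, hb⟩⟩ := hf
          simp only [Finset.mem_inter] at ha
          simp only [Finset.mem_inter, Finset.mem_sdiff] at hb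
          have hbS : b ∉ S := fun h =>
            hb.2.2 ⟨hb.2.1, h⟩
          have hfe : f ≠ e := by
            rintro rfl
            exact hbS (heS hb.1)
          have hfG : f ∈ G.edges := by
            have := hsub.2 hfE
            simp only [addEdge, Finset.mem_insert] at this
            tauto
          exact ⟨hfG, ⟨a, Finset.mem_inter.mpr ⟨ha.1, ha.2.2⟩⟩,
            ⟨b, Finset.mem_inter.mpr ⟨hb.1, Finset.mem_sdiff.mpr ⟨hvG hb.2.1, hbS⟩⟩⟩⟩
        have h1 := edgeConn_le_cut H' Finset.inter_subset_left hne0 hX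
        have h2 := Finset.card_le_card hsubcut
        omega

end FinHypergraph
namespace FinHypergraph

variable {α : Type*} [DecidableEq α]

lemma two_mul_choose_two (m : ℕ) : 2 * m.choose 2 = m * (m - 1) := by
  induction m with
  | zero => simp
  | succ m ih =>
    rw [Nat.choose_succ_succ, Nat.choose_one_right, Nat.mul_add, ih]
    cases m with
    | zero => simp
    | succ m' => simp only [Nat.add_sub_cancel]; ring

lemma choose_succ_two (m : ℕ) : (m + 1).choose 2 = m.choose 2 + m := by
  rw [Nat.choose_succ_succ, Nat.choose_one_right, Nat.add_comm]

lemma MFamily.uniform {k t : ℕ} {H : FinHypergraph α} (h : MFamily k 2 t H) :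
    H.IsUniform 2 := by
  induction h with
  | base V hV =>
    intro e he
    rw [Finset.mem_powersetCard] at he
    exact he
  | step H v E hH hv hE hprop ih =>
    intro e he
    simp only [Finset.mem_union] at he
    rcases he with he | he
    · exact ⟨(ih e he).1.trans (Finset.subset_insert v H.verts), (ih e he).2⟩
    · exact ⟨(hprop e he).2.1, (hprop e he).2.2⟩

lemma MFamily.card_verts_ge {k : ℕ} {H : FinHypergraph α} (h : MFamily k 2 (k+1) H) :
    k + 1 ≤ H.verts.card := by
  induction h with
  | base V hV => simp [hV]
  | step H v E hH hv hE hprop ih =>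
    simp only [Finset.card_insert_of_notMem hv]
    omega

lemma MFamily.card_edges {k : ℕ} {H : FinHypergraph α} (h : MFamily k 2 (k+1) H) :
    H.edges.card = k.choose 2 + (H.verts.card - k) * k := by
  induction h with
  | base V hV =>
    show (V.powersetCard 2).card = _
    rw [Finset.card_powersetCard, hV, choose_succ_two]
    simp
  | step H v E hH hv hE hprop ih =>
    have hdisj : Disjoint H.edges E := by
      rw [Finset.disjoint_left]
      intro e heH heE
      exact hv ((hH.uniform e heH).1 (hprop e heE).1)
    show (H.edges ∪ E).card = k.choose 2 + ((insert v H.verts).card - k) * k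
    rw [Finset.card_union_of_disjoint hdisj, hE, ih,
      Finset.card_insert_of_notMem hv]
    have hm := hH.card_verts_ge
    have h1 : H.verts.card + 1 - k = (H.verts.card - k) + 1 := by omega
    rw [h1, Nat.add_mul, Nat.one_mul, Nat.add_assoc]

/-- arithmetic: both sides large. -/
lemma arith_C4 (k a b : ℕ) (hk : 2 ≤ k) (ha : k + 1 ≤ a) (hb : k + 1 ≤ b) :
    (k.choose 2 + (a - k) * k) + (k.choose 2 + (b - k) * k) + k
      < k.choose 2 + (a + b - k) * k := by
  have h1 : a + b - k = (a - k) + (b - k) + k := by omega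
  rw [h1, Nat.add_mul, Nat.add_mul]
  have h2 := two_mul_choose_two k
  have key : k.choose 2 + k < k * k := by
    obtain ⟨r, rfl⟩ : ∃ r, k = r + 1 := ⟨k - 1, by omega⟩
    simp only [Nat.add_sub_cancel] at h2
    nlinarith
  omega

/-- arithmetic: one side small (≥2), other large. -/
lemma arith_C2 (k a b : ℕ) (hk : 2 ≤ k) (ha2 : 2 ≤ a) (hak : a ≤ k)
    (hb : k + 1 ≤ b) :
    a.choose 2 + (k.choose 2 + (b - k) * k) + k < k.choose 2 + (a + b - k) * k := by
  have h1 : a + b - k = (b - k) + a := by omega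
  rw [h1, Nat.add_mul]
  have h2 := two_mul_choose_two a
  have key : a.choose 2 + k < a * k := by
    obtain ⟨p, rfl⟩ : ∃ p, a = p + 1 := ⟨a - 1, by omega⟩
    simp only [Nat.add_sub_cancel] at h2
    nlinarith
  omega

/-- arithmetic: both sides small. -/
lemma arith_C1 (k a b : ℕ) (hk : 2 ≤ k) (ha2 : 2 ≤ a) (hak : a ≤ k)
    (hb2 : 2 ≤ b) (hbk : b ≤ k) (hab : k + 2 ≤ a + b) :
    a.choose 2 + b.choose 2 + k < k.choose 2 + (a + b - k) * k := by
  have hd : a + b - k + k = a + b := by omega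
  set d := a + b - k with hdd
  have hd2 : 2 ≤ d := by omega
  have hdk : d ≤ k := by omega
  have hda : d ≤ a := by omega
  have hdb : d ≤ b := by omega
  have h2a := two_mul_choose_two a
  have h2b := two_mul_choose_two b
  have h2k := two_mul_choose_two k
  obtain ⟨p, hp⟩ : ∃ p, a = p + 1 := ⟨a - 1, by omega⟩
  obtain ⟨q, hq⟩ : ∃ q, b = q + 1 := ⟨b - 1, by omega⟩
  obtain ⟨r, hr⟩ : ∃ r, k = r + 1 := ⟨k - 1, by omega⟩
  subst hp hq hr
  simp only [Nat.add_sub_cancel] at h2a h2b h2k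
  -- need: (p+1)p + (q+1)q + 2k < k(k-1) + 2dk  where relations hold
  have hab' : (p + 1 - d) * (q + 1 - d) ≥ 0 := Nat.zero_le _
  obtain ⟨x, hx⟩ : ∃ x, p + 1 = d + x := ⟨p + 1 - d, by omega⟩
  obtain ⟨y, hy⟩ : ∃ y, q + 1 = d + y := ⟨q + 1 - d, by omega⟩
  have hsum : d + x + (d + y) = (r + 1) + d := by omega
  nlinarith [h2a, h2b, h2k, hx, hy, hsum, hd2, hdk, Nat.zero_le (x*y)]

end FinHypergraph
namespace FinHypergraph

variable {α : Type*} [DecidableEq α]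

lemma singleton_side (G : FinHypergraph α) (k n : ℕ) (hk : 2 ≤ k)
    (hu : G.IsUniform 2) (hn : G.verts.card = n) (hn2 : k + 2 ≤ n)
    {v : α} (hv : v ∈ G.verts) (hc : (G.cut {v}).card ≤ k)
    (hb2 : (G.induce (G.verts \ {v})).edges.card ≤ k.choose 2 + (n - 1 - k) * k)
    (hm2 : (G.induce (G.verts \ {v})).edges.card = k.choose 2 + (n - 1 - k) * k →
      MFamily k 2 (k+1) (G.induce (G.verts \ {v}))) :
    G.edges.card ≤ k.choose 2 + (n - k) * k ∧
      (G.edges.card = k.choose 2 + (n - k) * k → MFamily k 2 (k+1) G) := by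
  have hS : ({v} : Finset α) ⊆ G.verts := Finset.singleton_subset_iff.mpr hv
  have hsplit := card_edges_split G hu hS
  have hE1 : (G.induce {v}).edges = ∅ := by
    apply Finset.eq_empty_of_forall_notMem
    intro e he
    simp only [induce, Finset.mem_filter] at he
    have h2 := (hu e he.1).2
    have := Finset.card_le_card he.2
    simp only [Finset.card_singleton] at this
    omega
  have hE1card : (G.induce {v}).edges.card = 0 := by rw [hE1]; rfl
  have harith : (n - 1 - k) * k + k = (n - k) * k := by
    have h1 : n - k = (n - 1 - k) + 1 := by omega
    rw [h1, Nat.add_mul, Nat.one_mul]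
  constructor
  · omega
  · intro heq
    have he2eq : (G.induce (G.verts \ {v})).edges.card
        = k.choose 2 + (n - 1 - k) * k := by omega
    have hck : (G.cut {v}).card = k := by omega
    have hfam := hm2 he2eq
    have hvT : v ∉ (G.induce (G.verts \ {v})).verts := by
      simp [induce]
    have hins : insert v (G.verts \ {v}) = G.verts := by
      ext x
      simp only [Finset.mem_insert, Finset.mem_sdiff, Finset.mem_singleton]
      constructor
      · rintro (rfl | ⟨h, -⟩)
        · exact hv
        · exact h
      · intro hx
        rcases eq_or_ne x v with rfl | hne
        · exact Or.inl rfl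
        · exact Or.inr ⟨hx, hne⟩
    have hprop : ∀ e ∈ G.cut {v}, v ∈ e ∧
        e ⊆ insert v (G.induce (G.verts \ {v})).verts ∧ e.card = 2 := by
      intro e he
      simp only [cut, Finset.mem_filter] at he
      obtain ⟨heE, ⟨x, hx⟩, -⟩ := he
      simp only [Finset.mem_inter, Finset.mem_singleton] at hx
      refine ⟨hx.2 ▸ hx.1, ?_, (hu e heE).2⟩
      show e ⊆ insert v (G.verts \ {v})
      rw [hins]
      exact (hu e heE).1
    have hstep := MFamily.step (G.induce (G.verts \ {v})) v (G.cut {v})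
      hfam hvT hck hprop
    have hedges : G.edges = (G.induce (G.verts \ {v})).edges ∪ G.cut {v} := by
      have h := edges_eq_union G hu hS
      rw [hE1] at h
      simpa using h
    have hGeq : (⟨insert v (G.induce (G.verts \ {v})).verts,
        (G.induce (G.verts \ {v})).edges ∪ G.cut {v}⟩ : FinHypergraph α) = G := by
      show (⟨insert v (G.verts \ {v}), _⟩ : FinHypergraph α) = G
      rw [hins, ← hedges]
    exact hGeq ▸ hstep

end FinHypergraph
namespace FinHypergraph

variable {α : Type*} [DecidableEq α]

lemma main_lemma (k : ℕ) (hk : 2 ≤ k) :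
    ∀ (n : ℕ) (G : FinHypergraph α), G.IsEdgeMaximal k 2 → G.verts.card = n →
      k + 1 ≤ n →
      G.edges.card ≤ k.choose 2 + (n - k) * k ∧
        (G.edges.card = k.choose 2 + (n - k) * k → MFamily k 2 (k+1) G) := by
  intro n
  induction n using Nat.strong_induction_on with
  | _ n IH =>
  intro G hG hn hnk
  rcases eq_or_lt_of_le hnk with hbase | hstep
  · -- base case : n = k + 1, G is complete
    have hcomp := complete_of_small G k hG (by omega)
    have hcard : G.edges.card = k.choose 2 + (n - k) * k := by
      rw [hcomp, Finset.card_powersetCard, hn, ← hbase, choose_succ_two]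
      have h1 : k + 1 - k = 1 := by omega
      rw [h1, Nat.one_mul]
    refine ⟨le_of_eq hcard, fun _ => ?_⟩
    have hMk : MFamily k 2 (k+1) (⟨G.verts, G.verts.powersetCard 2⟩ : FinHypergraph α) :=
      MFamily.base G.verts (by omega)
    have hGeq : (⟨G.verts, G.verts.powersetCard 2⟩ : FinHypergraph α) = G := by
      rw [← hcomp]
    exact hGeq ▸ hMk
  · -- inductive case : n ≥ k + 2; take a minimum edge-cut
    have hn2 : k + 2 ≤ n := hstep
    have hvne : G.verts.Nonempty := Finset.card_pos.mp (by omega)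
    obtain ⟨w, hw⟩ := hvne
    have hset : {d : ℕ | ∃ X : Finset α, X ⊆ G.verts ∧ X.Nonempty ∧ X ≠ G.verts ∧
        d = (G.cut X).card}.Nonempty := by
      refine ⟨(G.cut {w}).card, {w}, Finset.singleton_subset_iff.mpr hw,
        Finset.singleton_nonempty w, ?_, rfl⟩
      intro h
      have : G.verts.card = 1 := by rw [← h, Finset.card_singleton]
      omega
    obtain ⟨S, hS, hSne, hSv, hd⟩ := Nat.sInf_mem hset
    have hc : (G.cut S).card ≤ k := by
      have h1 : G.edgeConn ≤ G.strength :=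
        edgeConn_le_strength ⟨subset_rfl, subset_rfl⟩
      have h2 := hG.2.1
      have h3 : G.edgeConn = (G.cut S).card := hd
      omega
    have hT : G.verts \ S ⊆ G.verts := Finset.sdiff_subset
    have hcT : (G.cut (G.verts \ S)).card ≤ k := by
      rw [cut_sdiff_eq G hS]; exact hc
    have haS : S.card ≤ n := hn ▸ Finset.card_le_card hS
    have haT : (G.verts \ S).card = n - S.card := by
      rw [Finset.card_sdiff_of_subset hS, hn]
    have ha1 : 1 ≤ S.card := Finset.card_pos.mpr hSne
    have hb1 : 1 ≤ (G.verts \ S).card := by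
      obtain ⟨x, hxv, hxS⟩ := Finset.exists_of_ssubset (lt_of_le_of_ne hS hSv)
      exact Finset.card_pos.mpr ⟨x, Finset.mem_sdiff.mpr ⟨hxv, hxS⟩⟩
    have M1 := induce_edgeMaximal G k hG hS hc
    have M2 := induce_edgeMaximal G k hG hT hcT
    have hsplit := card_edges_split G hG.1 hS
    by_cases ha : S.card = 1
    · -- S = {v}
      obtain ⟨v, rfl⟩ := Finset.card_eq_one.mp ha
      have hv : v ∈ G.verts := hS (Finset.mem_singleton_self v)
      have hih := IH (n-1) (by omega) (G.induce (G.verts \ {v})) M2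
        (by rw [show (G.induce (G.verts \ {v})).verts = G.verts \ {v} from rfl,
          haT]; omega) (by omega)
      exact singleton_side G k n hk hG.1 hn hn2 hv hc hih.1 hih.2
    · by_cases hb : (G.verts \ S).card = 1
      · -- the complement is a singleton
        obtain ⟨v, hveq⟩ := Finset.card_eq_one.mp hb
        have hv : v ∈ G.verts :=
          hT (hveq ▸ Finset.mem_singleton_self v)
        have hSveq : G.verts \ {v} = S := by
          rw [← hveq, Finset.sdiff_sdiff_self_left,
            Finset.inter_eq_right.mpr hS]
        have hcv : (G.cut {v}).card ≤ k := by
          rw [← hveq]; exact hcT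
        have hih := IH (n-1) (by omega) (G.induce (G.verts \ {v}))
          (hSveq ▸ M1)
          (by rw [show (G.induce (G.verts \ {v})).verts = G.verts \ {v} from rfl,
            hSveq]; omega) (by omega)
        exact singleton_side G k n hk hG.1 hn hn2 hv hcv hih.1 hih.2
      · -- both sides have at least two vertices : strict inequality
        have ha2 : 2 ≤ S.card := by omega
        have hb2 : 2 ≤ (G.verts \ S).card := by omega
        have habn : S.card + (G.verts \ S).card = n := by omega
        have hsmall : ∀ U : Finset α, (G.induce U).IsEdgeMaximal k 2 →
            U.card ≤ k → (G.induce U).edges.card = U.card.choose 2 := by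
          intro U MU hUk
          rw [complete_of_small _ k MU (by
            show U.card ≤ k + 1; omega)]
          show (U.powersetCard 2).card = _
          rw [Finset.card_powersetCard]
        have hlarge : ∀ U : Finset α, (G.induce U).IsEdgeMaximal k 2 →
            k + 1 ≤ U.card → U.card < n →
            (G.induce U).edges.card ≤ k.choose 2 + (U.card - k) * k := by
          intro U MU hUge hUlt
          exact (IH U.card hUlt (G.induce U) MU rfl hUge).1
        have hstrict : G.edges.card < k.choose 2 + (n - k) * k := by
          by_cases hak : S.card ≤ k
          · by_cases hbk : (G.verts \ S).card ≤ k
            · have e1 := hsmall S M1 hak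
              have e2 := hsmall _ M2 hbk
              have harith := arith_C1 k S.card (G.verts \ S).card hk ha2 hak
                hb2 hbk (by omega)
              rw [habn] at harith
              omega
            · have e1 := hsmall S M1 hak
              have e2 := hlarge _ M2 (by omega) (by omega)
              have harith := arith_C2 k S.card (G.verts \ S).card hk ha2 hak
                (by omega)
              rw [habn] at harith
              omega
          · by_cases hbk : (G.verts \ S).card ≤ k
            · have e1 := hlarge S M1 (by omega) (by omega)
              have e2 := hsmall _ M2 hbk
              have harith := arith_C2 k (G.verts \ S).card S.card hk hb2 hbk
                (by omega)
              have habn' : (G.verts \ S).card + S.card = n := by omega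
              rw [habn'] at harith
              omega
            · have e1 := hlarge S M1 (by omega) (by omega)
              have e2 := hlarge _ M2 (by omega) (by omega)
              have harith := arith_C4 k S.card (G.verts \ S).card hk (by omega)
                (by omega)
              rw [habn] at harith
              omega
        exact ⟨le_of_lt hstrict, fun h => absurd h (by omega)⟩

end FinHypergraph

/-- Mader. Let `k ≥ 2` and let `G` be a `k`-edge-maximal simple graph
(a `2`-uniform hypergraph) on `n ≥ k+1` vertices. Then `|E(G)| ≤ C(k,2) + (n-k)·k`, with
equality iff `G ∈ M(n;k,2)` (here `t(k,2) = k+1`). -/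
theorem mader_upper_bound {α : Type*} [DecidableEq α] (k n : ℕ) (hk : 2 ≤ k)
    (G : FinHypergraph α) (hG : G.IsEdgeMaximal k 2)
    (hn : G.verts.card = n) (hnk : k + 1 ≤ n) :
    G.edges.card ≤ k.choose 2 + (n - k) * k ∧
      (G.edges.card = k.choose 2 + (n - k) * k ↔ FinHypergraph.MFamily k 2 (k + 1) G) := by
  obtain ⟨hle, heq⟩ := FinHypergraph.main_lemma k hk n G hG hn hnk
  refine ⟨hle, heq, fun hfam => ?_⟩
  have := hfam.card_edges
  rw [hn] at this
  exact this
end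

section
/- Let k, t, r be integers with t > r > 2, k = C(t−1,r−1), and kr ≥ 2t, and let n = st with s ≥ 2. Then for any tree T on s vertices, every hypergraph H in the family N(T) satisfies |E(H)| = (n−1)·k − ((t−1)·k − C(t,r))·⌊n/t⌋; consequently the lower bound (n−1)·k − ((t−1)·k − C(t,r))·⌊n/t⌋ on the size of k-edge-maximal r-uniform hypergraphs is attained. -/
/-- The family `N(T)` for a tree `T` (with vertex type `β`): replace each vertex `i` of `T`
by a complete `r`-uniform hypergraph on a `t`-set `W i` (the `W i` pairwise disjoint), and
for each tree edge `ij` add a set `E i j` of `k` edges of cardinality `r`, each contained in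
`W i ∪ W j` and meeting both `W i` and `W j`, such that every vertex of `W i ∪ W j` lies in
some edge of `E i j`. -/
def NFamily {α β : Type*} [DecidableEq α] [Fintype β] [DecidableEq β]
    (T : SimpleGraph β) [DecidableRel T.Adj] (k r t : ℕ) (H : FinHypergraph α) : Prop :=
  ∃ (W : β → Finset α) (E : β → β → Finset (Finset α)),
    (∀ i, (W i).card = t) ∧
    (∀ i j, i ≠ j → Disjoint (W i) (W j)) ∧
    (∀ i j, E i j = E j i) ∧
    (∀ i j, T.Adj i j →
      (E i j).card = k ∧
      (∀ e ∈ E i j, e.card = r ∧ e ⊆ W i ∪ W j ∧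
        (e ∩ W i).Nonempty ∧ (e ∩ W j).Nonempty) ∧
      (∀ u ∈ W i ∪ W j, ∃ e ∈ E i j, u ∈ e)) ∧
    H.verts = Finset.univ.biUnion W ∧
    H.edges = (Finset.univ.biUnion fun i => (W i).powersetCard r) ∪
      Finset.univ.biUnion (fun i => Finset.univ.biUnion fun j =>
        if T.Adj i j then E i j else ∅)
/-- Let `t > r > 2`, `k = C(t-1,r-1)`, `kr ≥ 2t`, and `n = st` with
`s ≥ 2`. Then for any tree `T` on `s` vertices, every `H ∈ N(T)` satisfies
`|E(H)| = (n-1)·k - ((t-1)·k - C(t,r))·⌊n/t⌋`; hence the lower bound of Theorem 4.1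
is attained. -/
theorem NFamily_size {α β : Type*} [DecidableEq α] [Fintype β] [DecidableEq β]
    (k t r s n : ℕ) (hrt : r < t) (hr : 2 < r)
    (hk : k = (t - 1).choose (r - 1)) (hkr : 2 * t ≤ k * r)
    (hn : n = s * t) (hs : 2 ≤ s)
    (T : SimpleGraph β) [DecidableRel T.Adj] (hT : T.IsTree) (hβ : Fintype.card β = s)
    (H : FinHypergraph α) (hH : NFamily T k r t H) :
    (H.edges.card : ℤ) =
      ((n : ℤ) - 1) * k - (((t : ℤ) - 1) * k - (t.choose r : ℤ)) * ((n / t : ℕ) : ℤ) := by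
  classical
  obtain ⟨W, E, hWcard, hWdisj, hEsym, hAdj, hverts, hedges⟩ := hH
  have ht : 0 < t := lt_trans (lt_trans (by norm_num) hr) hrt
  -- helper: if f meets W i and f ⊆ W a ∪ W b then i = a or i = b
  have key : ∀ (i a b : β) (f : Finset α), (f ∩ W i).Nonempty → f ⊆ W a ∪ W b →
      i = a ∨ i = b := by
    rintro i a b f ⟨x, hx⟩ hsub
    rw [Finset.mem_inter] at hx
    rcases Finset.mem_union.1 (hsub hx.1) with h | h
    · left; by_contra hne
      exact Finset.disjoint_left.1 (hWdisj i a hne) hx.2 h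
    · right; by_contra hne
      exact Finset.disjoint_left.1 (hWdisj i b hne) hx.2 h
  set E' : Sym2 β → Finset (Finset α) := Sym2.lift ⟨E, fun i j => hEsym i j⟩ with hE'
  have hE'mk : ∀ i j, E' s(i, j) = E i j := fun i j => rfl
  set A : Finset (Finset α) := Finset.univ.biUnion fun i => (W i).powersetCard r with hA
  set B : Finset (Finset α) :=
    Finset.univ.biUnion (fun i => Finset.univ.biUnion fun j =>
      if T.Adj i j then E i j else ∅) with hB
  -- B as a biUnion over tree edges
  have hBeq : B = T.edgeFinset.biUnion E' := by
    ext f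
    simp only [hB, Finset.mem_biUnion, Finset.mem_univ, true_and,
      SimpleGraph.mem_edgeFinset]
    constructor
    · rintro ⟨i, j, hf⟩
      by_cases hadj : T.Adj i j
      · rw [if_pos hadj] at hf
        exact ⟨s(i, j), hadj, hf⟩
      · rw [if_neg hadj] at hf; exact absurd hf (Finset.notMem_empty f)
    · rintro ⟨e, he, hf⟩
      induction e using Sym2.ind with
      | _ i j =>
        rw [SimpleGraph.mem_edgeSet] at he
        exact ⟨i, j, by rw [if_pos he]; exact hf⟩
  -- edges in E i j are not in any powersetCard piece
  have hnotA : ∀ i j, T.Adj i j → ∀ f ∈ E i j, ∀ l, ¬ f ⊆ W l := by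
    intro i j hadj f hf l hsub
    obtain ⟨-, hsubij, hi, hj⟩ := (hAdj i j hadj).2.1 f hf
    have hsub' : f ⊆ W l ∪ W l := by intro x hx; exact Finset.mem_union_left _ (hsub hx)
    have h1 : i = l ∨ i = l := key i l l f hi hsub'
    have h2 : j = l ∨ j = l := key j l l f hj hsub'
    have hil : i = l := h1.elim id id
    have hjl : j = l := h2.elim id id
    exact T.ne_of_adj hadj (hil.trans hjl.symm)
  -- A and B are disjoint
  have hAB : Disjoint A B := by
    rw [Finset.disjoint_left]
    intro f hfA hfB
    rw [hBeq, Finset.mem_biUnion] at hfB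
    obtain ⟨e, he, hf⟩ := hfB
    rw [hA, Finset.mem_biUnion] at hfA
    obtain ⟨l, -, hfl⟩ := hfA
    rw [Finset.mem_powersetCard] at hfl
    induction e using Sym2.ind with
    | _ i j =>
      rw [SimpleGraph.mem_edgeFinset, SimpleGraph.mem_edgeSet] at he
      exact hnotA i j he f hf l hfl.1
  -- cardinality of A
  have hAcard : A.card = s * t.choose r := by
    rw [hA, Finset.card_biUnion]
    · rw [Finset.sum_congr rfl (fun i _ => by rw [Finset.card_powersetCard, hWcard i]),
        Finset.sum_const, smul_eq_mul, Finset.card_univ, hβ]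
    · intro i _ j _ hij
      rw [Function.onFun, Finset.disjoint_left]
      intro f hfi hfj
      rw [Finset.mem_powersetCard] at hfi hfj
      have hne : f.Nonempty := Finset.card_pos.1 (by rw [hfi.2]; omega)
      obtain ⟨x, hx⟩ := hne
      exact Finset.disjoint_left.1 (hWdisj i j hij) (hfi.1 hx) (hfj.1 hx)
  -- cardinality of B
  have hBcard : B.card = (s - 1) * k := by
    rw [hBeq, Finset.card_biUnion]
    · have hcard : ∀ e ∈ T.edgeFinset, (E' e).card = k := by
        intro e he
        induction e using Sym2.ind with
        | _ i j =>
          rw [SimpleGraph.mem_edgeFinset, SimpleGraph.mem_edgeSet] at he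
          exact (hAdj i j he).1
      have hec : T.edgeFinset.card = s - 1 := by
        have := hT.card_edgeFinset
        omega
      rw [Finset.sum_congr rfl hcard, Finset.sum_const, smul_eq_mul, hec]
    · intro e he e' he' hee
      induction e using Sym2.ind with
      | _ i j =>
        induction e' using Sym2.ind with
        | _ i' j' =>
          rw [Finset.mem_coe, SimpleGraph.mem_edgeFinset, SimpleGraph.mem_edgeSet] at he he'
          rw [Function.onFun, Finset.disjoint_left]
          intro f hf hf'
          obtain ⟨-, hsubij, hi, hj⟩ := (hAdj i j he).2.1 f hf
          obtain ⟨-, hsubij', hi', hj'⟩ := (hAdj i' j' he').2.1 f hf'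
          have h1 := key i i' j' f hi hsubij'
          have h2 := key j i' j' f hj hsubij'
          have hij : i ≠ j := T.ne_of_adj he
          apply hee
          rw [Sym2.eq_iff]
          rcases h1 with h | h <;> rcases h2 with h' | h'
          · exact absurd (h.trans h'.symm) hij
          · exact Or.inl ⟨h, h'⟩
          · exact Or.inr ⟨h, h'⟩
          · exact absurd (h.trans h'.symm) hij
  -- total count
  have htotal : H.edges.card = s * t.choose r + (s - 1) * k := by
    rw [hedges, Finset.card_union_of_disjoint hAB, hAcard, hBcard]
  have hnt : n / t = s := by rw [hn, Nat.mul_div_cancel _ ht]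
  rw [htotal, hnt, hn]
  have hs1 : (((s : ℕ) - 1 : ℕ) : ℤ) = (s : ℤ) - 1 := by
    have : 1 ≤ s := by omega
    push_cast [this]; ring
  push_cast [hs1]
  ring
end

section
/- Let n, r, n_1 be integers with 2 ≤ r ≤ n−1 and 2 ≤ n_1 ≤ n/2. Then C(n,r) − C(n_1,r) − C(n−n_1,r) > C(n−1,r−1), where C(a,b) denotes the binomial coefficient (taken to be 0 when b > a). -/
theorem choose_aux : ∀ n₁, 2 ≤ n₁ → ∀ m r, n₁ ≤ m → 2 ≤ r → r ≤ m →
    n₁.choose r + m.choose r < (n₁ + m - 1).choose r := by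
  intro n₁ h₂
  induction n₁, h₂ using Nat.le_induction with
  | base =>
    intro m r hm hr hrm
    obtain ⟨r', rfl⟩ : ∃ r', r = r' + 1 := ⟨r - 1, by omega⟩
    have h1 : 2 + m - 1 = m + 1 := by omega
    have hp : (m + 1).choose (r' + 1) = m.choose r' + m.choose (r' + 1) :=
      Nat.choose_succ_succ m r'
    rw [h1, hp]
    have hpos : 0 < m.choose r' := Nat.choose_pos (by omega)
    rcases Nat.lt_or_ge r' 2 with h | h
    · have hr1 : r' = 1 := by omega
      subst hr1
      rw [Nat.choose_self, Nat.choose_one_right]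
      omega
    · have h0 : Nat.choose 2 (r' + 1) = 0 := Nat.choose_eq_zero_of_lt (by omega)
      rw [h0]
      omega
  | succ n₁ hn₁ ih =>
    intro m r hm hr hrm
    obtain ⟨r', rfl⟩ : ∃ r', r = r' + 1 := ⟨r - 1, by omega⟩
    have h1 : n₁ + 1 + m - 1 = (n₁ + m - 1) + 1 := by omega
    have hp1 : ((n₁ + m - 1) + 1).choose (r' + 1)
        = (n₁ + m - 1).choose r' + (n₁ + m - 1).choose (r' + 1) :=
      Nat.choose_succ_succ _ _
    have hp2 : (n₁ + 1).choose (r' + 1) = n₁.choose r' + n₁.choose (r' + 1) :=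
      Nat.choose_succ_succ _ _
    rw [h1, hp1, hp2]
    have hih := ih m (r' + 1) (by omega) hr hrm
    have hmono : n₁.choose r' ≤ (n₁ + m - 1).choose r' :=
      Nat.choose_le_choose r' (by omega)
    omega

/-- Let `2 ≤ r ≤ n-1` and `2 ≤ n₁ ≤ n/2`. Then
`C(n,r) - C(n₁,r) - C(n-n₁,r) > C(n-1,r-1)`. -/
theorem choose_cut_gt {n r n₁ : ℕ} (hr : 2 ≤ r) (hrn : r ≤ n - 1)
    (hn₁ : 2 ≤ n₁) (hn₁n : 2 * n₁ ≤ n) :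
    ((n - 1).choose (r - 1) : ℤ) <
      (n.choose r : ℤ) - (n₁.choose r : ℤ) - ((n - n₁).choose r : ℤ) := by
  have key : n₁.choose r + (n - n₁).choose r < (n - 1).choose r := by
    rcases Nat.lt_or_ge (n - n₁) r with h | h
    · have h1 : n₁.choose r = 0 := Nat.choose_eq_zero_of_lt (by omega)
      have h2 : (n - n₁).choose r = 0 := Nat.choose_eq_zero_of_lt h
      rw [h1, h2]
      exact Nat.choose_pos (by omega)
    · have := choose_aux n₁ hn₁ (n - n₁) r (by omega) hr h
      have heq : n₁ + (n - n₁) - 1 = n - 1 := by omega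
      rwa [heq] at this
  have hpascal : n.choose r = (n - 1).choose (r - 1) + (n - 1).choose r := by
    obtain ⟨n', rfl⟩ : ∃ n', n = n' + 1 := ⟨n - 1, by omega⟩
    obtain ⟨r', rfl⟩ : ∃ r', r = r' + 1 := ⟨r - 1, by omega⟩
    simp [Nat.choose_succ_succ]
  have : (n - 1).choose (r - 1) + n₁.choose r + (n - n₁).choose r < n.choose r := by omega
  have hz : (((n - 1).choose (r - 1) + n₁.choose r + (n - n₁).choose r : ℕ) : ℤ) < (n.choose r : ℕ) := by
    exact_mod_cast this
  push_cast at hz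
  linarith
end

section
/- Let k ≥ 1 be an integer and let G be a k-edge-maximal (simple) graph on n vertices with n > k+1. Then |E(G)| ≥ (n−1)·k − ⌊n/(k+2)⌋·C(k,2). -/
namespace LaiAux
open FinHypergraph Finset

variable {α : Type*} [DecidableEq α]

/-- pair reconstruction -/
lemma edge_pair {e : Finset α} (he : e.card = 2) {x : α} (hx : x ∈ e) :
    ∃ y, y ∈ e ∧ y ≠ x ∧ e = {x, y} := by
  obtain ⟨a, b, hab, rfl⟩ := Finset.card_eq_two.mp he
  rcases Finset.mem_insert.mp hx with rfl | hx'
  · exact ⟨b, by simp, fun h => hab h.symm, rfl⟩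
  · rcases Finset.mem_singleton.mp hx' with rfl
    exact ⟨a, by simp, hab, Finset.pair_comm a x⟩

lemma pair_eq_of_mem {u v x y : α} (hx : x ∈ ({u, v} : Finset α)) (hy : y ∈ ({u, v} : Finset α))
    (hxy : x ≠ y) : ({u, v} : Finset α) = {x, y} := by
  simp only [Finset.mem_insert, Finset.mem_singleton] at hx hy
  rcases hx with rfl | rfl <;> rcases hy with rfl | rfl
  · exact absurd rfl hxy
  · rfl
  · exact Finset.pair_comm x y ▸ rfl
  · exact absurd rfl hxy

lemma cut_subset_edges (H : FinHypergraph α) (X : Finset α) : H.cut X ⊆ H.edges :=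
  Finset.filter_subset _ _

lemma edgeConn_le (H : FinHypergraph α) {X : Finset α} (h1 : X ⊆ H.verts)
    (h2 : X.Nonempty) (h3 : X ≠ H.verts) : H.edgeConn ≤ (H.cut X).card :=
  Nat.sInf_le ⟨X, h1, h2, h3, rfl⟩

lemma edgeConn_le_card (H : FinHypergraph α) : H.edgeConn ≤ H.edges.card := by
  unfold edgeConn
  by_cases h : {d : ℕ | ∃ X : Finset α, X ⊆ H.verts ∧ X.Nonempty ∧ X ≠ H.verts ∧ d = (H.cut X).card}.Nonempty
  · obtain ⟨X, _, _, _, hd⟩ := Nat.sInf_mem h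
    rw [hd]
    exact Finset.card_le_card (cut_subset_edges H X)
  · rw [Set.not_nonempty_iff_eq_empty.mp h, Nat.sInf_empty]; exact Nat.zero_le _

lemma strength_bddAbove (H : FinHypergraph α) :
    BddAbove {d : ℕ | ∃ H' : FinHypergraph α, H'.IsSub H ∧ d = H'.edgeConn} := by
  refine ⟨H.edges.card, ?_⟩
  rintro d ⟨H', hsub, rfl⟩
  exact le_trans (edgeConn_le_card H') (Finset.card_le_card hsub.2)

lemma mem_strengthSet {H H' : FinHypergraph α} (h : H'.IsSub H) :
    H'.edgeConn ∈ {d : ℕ | ∃ K : FinHypergraph α, K.IsSub H ∧ d = K.edgeConn} := ⟨H', h, rfl⟩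

lemma le_strength {H H' : FinHypergraph α} (h : H'.IsSub H) : H'.edgeConn ≤ H.strength :=
  le_csSup (strength_bddAbove H) (mem_strengthSet h)

lemma isSub_refl (H : FinHypergraph α) : H.IsSub H := ⟨subset_rfl, subset_rfl⟩

lemma exists_strength_witness (H : FinHypergraph α) :
    ∃ H' : FinHypergraph α, H'.IsSub H ∧ H.strength = H'.edgeConn :=
  Nat.sSup_mem ⟨H.edgeConn, mem_strengthSet (isSub_refl H)⟩ (strength_bddAbove H)

lemma strength_mono {H H' : FinHypergraph α} (h : H'.IsSub H) : H'.strength ≤ H.strength := by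
  apply csSup_le ⟨H'.edgeConn, mem_strengthSet (isSub_refl H')⟩
  rintro d ⟨K, hK, rfl⟩
  exact le_strength ⟨hK.1.trans h.1, hK.2.trans h.2⟩

/-- a cut of a subhypergraph, intersected with Y, embeds into the big cut of Y -/
lemma cut_inter_subset {H K : FinHypergraph α} (hsub : H.IsSub K) (Y : Finset α) :
    H.cut (H.verts ∩ Y) ⊆ K.cut Y := by
  intro e he
  simp only [cut, Finset.mem_filter] at he ⊢
  obtain ⟨hmem, ⟨x, hx⟩, ⟨y, hy⟩⟩ := he
  simp only [Finset.mem_inter, Finset.mem_sdiff] at hx hy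
  refine ⟨hsub.2 hmem, ⟨x, ?_⟩, ⟨y, ?_⟩⟩
  · simp only [Finset.mem_inter]; exact ⟨hx.1, hx.2.2⟩
  · simp only [Finset.mem_inter, Finset.mem_sdiff]
    exact ⟨hy.1, hsub.1 hy.2.1, fun hyY => hy.2.2 ⟨hy.2.1, hyY⟩⟩

set_option linter.unusedSectionVars false

lemma edgeConn_eq_of_cut_eq {H H' : FinHypergraph α} (hv : H'.verts = H.verts)
    (hc : ∀ X ⊆ H.verts, H'.cut X = H.cut X) : H'.edgeConn = H.edgeConn := by
  unfold FinHypergraph.edgeConn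
  congr 1
  ext d
  constructor
  · rintro ⟨X, h1, h2, h3, rfl⟩
    rw [hv] at h1 h3
    exact ⟨X, h1, h2, h3, by rw [hc X h1]⟩
  · rintro ⟨X, h1, h2, h3, rfl⟩
    refine ⟨X, by rw [hv]; exact h1, h2, by rw [hv]; exact h3, by rw [hc X h1]⟩

lemma edgeConn_erase_pair (H : FinHypergraph α) {u v : α}
    (h : ¬(u ∈ H.verts ∧ v ∈ H.verts)) :
    (FinHypergraph.mk H.verts (H.edges.erase {u,v})).edgeConn = H.edgeConn := by
  refine edgeConn_eq_of_cut_eq (H := H)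
    (H' := FinHypergraph.mk H.verts (H.edges.erase {u,v})) rfl ?_
  intro X hX
  unfold FinHypergraph.cut
  ext e'
  simp only [Finset.mem_filter, Finset.mem_erase]
  constructor
  · rintro ⟨⟨_, h1⟩, h2⟩; exact ⟨h1, h2⟩
  · rintro ⟨h1, h2⟩
    refine ⟨⟨?_, h1⟩, h2⟩
    rintro rfl
    obtain ⟨⟨x, hx⟩, ⟨y, hy⟩⟩ := h2
    simp only [Finset.mem_inter, Finset.mem_sdiff] at hx hy
    have hxy : x ≠ y := fun hEq => hy.2.2 (hEq ▸ hx.2)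
    have hpair : ({u, v} : Finset α) = {x, y} := pair_eq_of_mem hx.1 hy.1 hxy
    have hxV : x ∈ H.verts := hX hx.2
    have hyV : y ∈ H.verts := hy.2.1
    apply h
    constructor
    · have : u ∈ ({x, y} : Finset α) := hpair ▸ (Finset.mem_insert_self u {v})
      rcases Finset.mem_insert.mp this with rfl | h'
      · exact hxV
      · rw [Finset.mem_singleton.mp h']; exact hyV
    · have : v ∈ ({x, y} : Finset α) := hpair ▸ (Finset.mem_insert.mpr (Or.inr (Finset.mem_singleton_self v)))
      rcases Finset.mem_insert.mp this with rfl | h'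
      · exact hxV
      · rw [Finset.mem_singleton.mp h']; exact hyV

lemma strength_addEdge_le (G : FinHypergraph α) (k : ℕ) (hs : G.strength ≤ k)
    {Y : Finset α} (hY : Y ⊆ G.verts)
    {u v : α} (huY : u ∈ Y) (hvV : v ∈ G.verts) (hvY : v ∉ Y)
    (hcut : (G.cut Y).card + 1 ≤ k) :
    (G.addEdge {u,v}).strength ≤ k := by
  obtain ⟨H, hsub, heq⟩ := exists_strength_witness (G.addEdge {u,v})
  rw [heq]
  by_cases hc : u ∈ H.verts ∧ v ∈ H.verts
  · have hne : (H.verts ∩ Y).Nonempty := ⟨u, Finset.mem_inter.mpr ⟨hc.1, huY⟩⟩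
    have hproper : H.verts ∩ Y ≠ H.verts := by
      intro hEq
      have hv2 := hc.2
      rw [← hEq] at hv2
      exact hvY (Finset.mem_inter.mp hv2).2
    have h1 : H.edgeConn ≤ (H.cut (H.verts ∩ Y)).card :=
      edgeConn_le H Finset.inter_subset_left hne hproper
    have h2 : H.cut (H.verts ∩ Y) ⊆ (G.addEdge {u,v}).cut Y := cut_inter_subset hsub Y
    have h3 : (G.addEdge {u,v}).cut Y ⊆ insert {u,v} (G.cut Y) := by
      intro e' he'
      unfold FinHypergraph.cut FinHypergraph.addEdge at he'
      unfold FinHypergraph.cut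
      simp only [Finset.mem_filter, Finset.mem_insert] at he' ⊢
      rcases he'.1 with h' | h'
      · exact Or.inl h'
      · exact Or.inr ⟨h', he'.2⟩
    calc H.edgeConn ≤ (H.cut (H.verts ∩ Y)).card := h1
      _ ≤ ((G.addEdge {u,v}).cut Y).card := Finset.card_le_card h2
      _ ≤ (insert ({u,v} : Finset α) (G.cut Y)).card := Finset.card_le_card h3
      _ ≤ (G.cut Y).card + 1 := Finset.card_insert_le _ _
      _ ≤ k := hcut
  · rw [← edgeConn_erase_pair H hc]
    refine le_trans (le_strength (H := G) ⟨hsub.1, ?_⟩) hs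
    intro x hx
    obtain ⟨hne', hmem⟩ := Finset.mem_erase.mp hx
    rcases Finset.mem_insert.mp (hsub.2 hmem) with h' | h'
    · exact absurd h' hne'
    · exact h'

lemma cut_card_ge {G : FinHypergraph α} {k : ℕ} (hG : G.IsEdgeMaximal k 2)
    (hn : k + 2 ≤ G.verts.card) {Y : Finset α} (hY : Y ⊆ G.verts) (hY1 : Y.Nonempty)
    (hY2 : Y ≠ G.verts) : k ≤ (G.cut Y).card := by
  by_contra hlt
  push_neg at hlt
  have hcut : (G.cut Y).card + 1 ≤ k := hlt
  have hBne : (G.verts \ Y).Nonempty := by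
    obtain ⟨x, hx1, hx2⟩ := Finset.exists_of_ssubset (Finset.ssubset_iff_subset_ne.mpr ⟨hY, hY2⟩)
    exact ⟨x, Finset.mem_sdiff.mpr ⟨hx1, hx2⟩⟩
  have hsum : (G.verts \ Y).card + Y.card = G.verts.card := Finset.card_sdiff_add_card_eq_card hY
  have hprod : G.verts.card - 1 ≤ Y.card * (G.verts \ Y).card := by
    have h1 : 1 ≤ Y.card := Finset.card_pos.mpr hY1
    have h2 : 1 ≤ (G.verts \ Y).card := Finset.card_pos.mpr hBne
    have h3 : Y.card + (G.verts \ Y).card ≤ Y.card * (G.verts \ Y).card + 1 := by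
      nlinarith
    omega
  by_cases hall : ∀ p ∈ Y ×ˢ (G.verts \ Y), ({p.1, p.2} : Finset α) ∈ G.edges
  · have hsub : ∀ p ∈ Y ×ˢ (G.verts \ Y), ({p.1, p.2} : Finset α) ∈ G.cut Y := by
      intro p hp
      have hp' := Finset.mem_product.mp hp
      simp only [FinHypergraph.cut, Finset.mem_filter]
      have m1 : p.1 ∈ ({p.1, p.2} : Finset α) ∩ Y :=
        Finset.mem_inter.mpr ⟨Finset.mem_insert_self _ _, hp'.1⟩
      have m2 : p.2 ∈ ({p.1, p.2} : Finset α) ∩ (G.verts \ Y) :=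
        Finset.mem_inter.mpr ⟨Finset.mem_insert.mpr (Or.inr (Finset.mem_singleton_self _)), hp'.2⟩
      exact ⟨hall p hp, ⟨p.1, m1⟩, ⟨p.2, m2⟩⟩
    have hinj : Set.InjOn (fun p : α × α => ({p.1, p.2} : Finset α)) ↑(Y ×ˢ (G.verts \ Y)) := by
      intro p hp q hq hEq
      simp only [Finset.mem_coe, Finset.mem_product] at hp hq
      obtain ⟨hp1, hp2⟩ := hp
      obtain ⟨hq1, hq2⟩ := hq
      have hd : ∀ z ∈ Y, z ∉ G.verts \ Y := fun z hz hz' => (Finset.mem_sdiff.mp hz').2 hz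
      have hEq' : ({p.1, p.2} : Finset α) = {q.1, q.2} := hEq
      have h1 : p.1 ∈ ({q.1, q.2} : Finset α) := by
        rw [← hEq']; exact Finset.mem_insert_self _ _
      have h2 : p.2 ∈ ({q.1, q.2} : Finset α) := by
        rw [← hEq']; exact Finset.mem_insert.mpr (Or.inr (Finset.mem_singleton_self _))
      have e1 : p.1 = q.1 := by
        rcases Finset.mem_insert.mp h1 with h | h
        · exact h
        · rw [Finset.mem_singleton] at h
          rw [h] at hp1; exact absurd hq2 (hd _ hp1)
      have e2 : p.2 = q.2 := by
        rcases Finset.mem_insert.mp h2 with h | h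
        · rw [h] at hp2; exact absurd hp2 (hd _ hq1)
        · exact Finset.mem_singleton.mp h
      exact Prod.ext e1 e2
    have hcard : (Y ×ˢ (G.verts \ Y)).card ≤ (G.cut Y).card :=
      Finset.card_le_card_of_injOn _ hsub hinj
    rw [Finset.card_product] at hcard
    omega
  · push_neg at hall
    obtain ⟨p, hp, hmiss⟩ := hall
    rw [Finset.mem_product] at hp
    have hpB := Finset.mem_sdiff.mp hp.2
    have hne : p.1 ≠ p.2 := fun hEq => hpB.2 (hEq ▸ hp.1)
    have hmax := hG.2.2 {p.1, p.2} (by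
        intro z hz
        rcases Finset.mem_insert.mp hz with rfl | hz'
        · exact hY hp.1
        · rw [Finset.mem_singleton.mp hz']; exact hpB.1)
      (Finset.card_pair hne) hmiss
    have hle := strength_addEdge_le G k hG.2.1 hY hp.1 hpB.1 hpB.2 hcut
    omega

lemma induce_isSub (G : FinHypergraph α) {A : Finset α} (hA : A ⊆ G.verts) :
    (G.induce A).IsSub G := ⟨hA, Finset.filter_subset _ _⟩

lemma induce_uniform {G : FinHypergraph α} (hu : G.IsUniform 2) (A : Finset α) :
    (G.induce A).IsUniform 2 := by
  intro e he
  have he' := Finset.mem_filter.mp he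
  exact ⟨he'.2, (hu e he'.1).2⟩

lemma induce_isEdgeMaximal {G : FinHypergraph α} {k : ℕ} (hG : G.IsEdgeMaximal k 2)
    {A : Finset α} (hA : A ⊆ G.verts) (hcut : (G.cut A).card ≤ k)
    (hnonA : ¬ G.verts ⊆ A) : (G.induce A).IsEdgeMaximal k 2 := by
  refine ⟨induce_uniform hG.1 A, le_trans (strength_mono (induce_isSub G hA)) hG.2.1, ?_⟩
  intro e heA he2 henot
  have heG : e ∉ G.edges := fun h => henot (Finset.mem_filter.mpr ⟨h, heA⟩)
  have hstr := hG.2.2 e (heA.trans hA) he2 heG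
  obtain ⟨H, hsub, heq⟩ := exists_strength_witness (G.addEdge e)
  rw [heq] at hstr
  by_cases h1 : e ⊆ H.verts
  · by_cases h2 : H.verts ⊆ A
    · -- restrict H to edges within A
      have hcuts : ∀ X ⊆ H.verts,
          (FinHypergraph.mk H.verts (H.edges.filter (· ⊆ A))).cut X = H.cut X := by
        intro X hX
        apply Finset.Subset.antisymm
        · intro e' he'
          simp only [FinHypergraph.cut, Finset.mem_filter] at he' ⊢
          exact ⟨he'.1.1, he'.2⟩
        · intro e' he'
          simp only [FinHypergraph.cut, Finset.mem_filter] at he' ⊢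
          obtain ⟨hmem, ⟨x, hx⟩, ⟨y, hy⟩⟩ := he'
          rw [Finset.mem_inter] at hx hy
          rw [Finset.mem_sdiff] at hy
          have hxy : x ≠ y := fun hEq => hy.2.2 (hEq ▸ hx.2)
          have hcard : e'.card = 2 := by
            rcases Finset.mem_insert.mp (hsub.2 hmem) with h' | h'
            · rw [h']; exact he2
            · exact (hG.1 e' h').2
          have hpair : ({x, y} : Finset α) = e' := by
            apply Finset.eq_of_subset_of_card_le
            · intro z hz
              rcases Finset.mem_insert.mp hz with rfl | hz'
              · exact hx.1
              · rw [Finset.mem_singleton.mp hz']; exact hy.1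
            · rw [hcard, Finset.card_pair hxy]
          have hsubA : e' ⊆ A := by
            rw [← hpair]
            intro z hz
            rcases Finset.mem_insert.mp hz with rfl | hz'
            · exact h2 (hX hx.2)
            · rw [Finset.mem_singleton.mp hz']; exact h2 hy.2.1
          exact ⟨⟨hmem, hsubA⟩, ⟨x, Finset.mem_inter.mpr hx⟩,
            ⟨y, Finset.mem_inter.mpr ⟨hy.1, Finset.mem_sdiff.mpr hy.2⟩⟩⟩
      have hconn : (FinHypergraph.mk H.verts (H.edges.filter (· ⊆ A))).edgeConn = H.edgeConn :=
        edgeConn_eq_of_cut_eq rfl hcuts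
      have hsub' : (FinHypergraph.mk H.verts (H.edges.filter (· ⊆ A))).IsSub
          ((G.induce A).addEdge e) := by
        refine ⟨h2, ?_⟩
        intro x hx
        obtain ⟨hxE, hxA⟩ := Finset.mem_filter.mp hx
        rcases Finset.mem_insert.mp (hsub.2 hxE) with rfl | h'
        · exact Finset.mem_insert_self _ _
        · exact Finset.mem_insert.mpr (Or.inr (Finset.mem_filter.mpr ⟨h', hxA⟩))
      calc k + 1 ≤ H.edgeConn := hstr
        _ = _ := hconn.symm
        _ ≤ ((G.induce A).addEdge e).strength := le_strength hsub'
    · -- H sticks out of A : contradiction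
      exfalso
      obtain ⟨w, hw⟩ := Finset.not_subset.mp h2
      have hene : e.Nonempty := Finset.card_pos.mp (by rw [he2]; omega)
      obtain ⟨u, hu⟩ := hene
      have hXne : (H.verts ∩ A).Nonempty := ⟨u, Finset.mem_inter.mpr ⟨h1 hu, heA hu⟩⟩
      have hproper : H.verts ∩ A ≠ H.verts := by
        intro hEq
        rw [← hEq] at hw
        exact hw.2 (Finset.mem_inter.mp hw.1).2
      have hb : H.edgeConn ≤ (H.cut (H.verts ∩ A)).card :=
        edgeConn_le H Finset.inter_subset_left hXne hproper
      have hc2 : H.cut (H.verts ∩ A) ⊆ (G.addEdge e).cut A := cut_inter_subset hsub A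
      have hc3 : (G.addEdge e).cut A = G.cut A := by
        unfold FinHypergraph.cut FinHypergraph.addEdge
        rw [Finset.filter_insert, if_neg]
        rintro ⟨-, ⟨y, hy⟩⟩
        rw [Finset.mem_inter, Finset.mem_sdiff] at hy
        exact hy.2.2 (heA hy.1)
      have := le_trans hb (Finset.card_le_card hc2)
      rw [hc3] at this
      omega
  · -- an endpoint of e is outside H : H minus e is a subgraph of G
    exfalso
    obtain ⟨u, v, huv, rfl⟩ := Finset.card_eq_two.mp he2
    have hc : ¬(u ∈ H.verts ∧ v ∈ H.verts) := by
      rintro ⟨h3, h4⟩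
      apply h1
      intro z hz
      rcases Finset.mem_insert.mp hz with rfl | hz'
      · exact h3
      · rw [Finset.mem_singleton.mp hz']; exact h4
    rw [← edgeConn_erase_pair H hc] at hstr
    have hsubG : (FinHypergraph.mk H.verts (H.edges.erase {u,v})).IsSub G := by
      refine ⟨hsub.1, ?_⟩
      intro x hx
      obtain ⟨hne', hmem⟩ := Finset.mem_erase.mp hx
      rcases Finset.mem_insert.mp (hsub.2 hmem) with h' | h'
      · exact absurd h' hne'
      · exact h'
    have := le_trans (le_strength hsubG) hG.2.1
    omega

lemma cut_compl (G : FinHypergraph α) {A : Finset α} (hA : A ⊆ G.verts) :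
    G.cut (G.verts \ A) = G.cut A := by
  unfold FinHypergraph.cut
  have hrw : G.verts \ (G.verts \ A) = A := by
    rw [Finset.sdiff_sdiff_self_left, Finset.inter_eq_right.mpr hA]
  ext e'
  simp only [Finset.mem_filter, hrw]
  tauto

lemma cut_singleton {G : FinHypergraph α} (hu : G.IsUniform 2) {v : α} (hv : v ∈ G.verts) :
    G.cut {v} = G.edges.filter (fun e => v ∈ e) := by
  ext e'
  simp only [FinHypergraph.cut, Finset.mem_filter]
  constructor
  · rintro ⟨h1, ⟨x, hx⟩, -⟩
    rw [Finset.mem_inter, Finset.mem_singleton] at hx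
    exact ⟨h1, hx.2 ▸ hx.1⟩
  · rintro ⟨h1, h2⟩
    refine ⟨h1, ⟨v, Finset.mem_inter.mpr ⟨h2, Finset.mem_singleton_self v⟩⟩, ?_⟩
    obtain ⟨y, hy, hyne, -⟩ := edge_pair (hu e' h1).2 h2
    refine ⟨y, Finset.mem_inter.mpr ⟨hy, Finset.mem_sdiff.mpr ⟨(hu e' h1).1 hy, ?_⟩⟩⟩
    rw [Finset.mem_singleton]
    exact hyne

lemma degree_ge {G : FinHypergraph α} {k : ℕ} (hG : G.IsEdgeMaximal k 2)
    (hn : k + 2 ≤ G.verts.card) {v : α} (hv : v ∈ G.verts) : k ≤ G.degree v := by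
  have h1 : ({v} : Finset α) ≠ G.verts := by
    intro h
    rw [← h, Finset.card_singleton] at hn
    omega
  have h2 := cut_card_ge hG hn (Finset.singleton_subset_iff.mpr hv)
    ⟨v, Finset.mem_singleton_self v⟩ h1
  rwa [cut_singleton hG.1 hv] at h2

lemma sum_degree_le {G : FinHypergraph α} (hu : G.IsUniform 2) (A : Finset α) :
    ∑ w ∈ A, G.degree w ≤ 2 * (G.induce A).edges.card + (G.cut A).card := by
  have h1 : ∑ w ∈ A, G.degree w = ∑ e ∈ G.edges, (e ∩ A).card := by
    unfold FinHypergraph.degree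
    simp_rw [Finset.card_filter]
    rw [Finset.sum_comm]
    apply Finset.sum_congr rfl
    intro e _
    rw [← Finset.card_filter]
    congr 1
    rw [Finset.filter_mem_eq_inter, Finset.inter_comm]
  rw [h1, ← Finset.sum_filter_add_sum_filter_not G.edges (fun e => e ⊆ A)]
  have hb1 : ∑ e ∈ G.edges.filter (fun e => e ⊆ A), (e ∩ A).card
      ≤ 2 * (G.induce A).edges.card := by
    have hmain : ∑ e ∈ G.edges.filter (fun e => e ⊆ A), (e ∩ A).card
        ≤ (G.edges.filter (fun e => e ⊆ A)).card • 2 := by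
      apply Finset.sum_le_card_nsmul
      intro e he
      calc (e ∩ A).card ≤ e.card := Finset.card_le_card Finset.inter_subset_left
        _ = 2 := (hu e (Finset.mem_filter.mp he).1).2
    rw [smul_eq_mul, mul_comm] at hmain
    exact hmain
  have hb2 : ∑ e ∈ G.edges.filter (fun e => ¬ e ⊆ A), (e ∩ A).card ≤ (G.cut A).card := by
    have step : ∀ e ∈ G.edges.filter (fun e => ¬ e ⊆ A),
        (e ∩ A).card ≤ if e ∈ G.cut A then 1 else 0 := by
      intro e he
      obtain ⟨heE, hnsub⟩ := Finset.mem_filter.mp he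
      by_cases hne : (e ∩ A).Nonempty
      · obtain ⟨x, hx1, hx2⟩ := Finset.not_subset.mp hnsub
        have hcut : e ∈ G.cut A := by
          simp only [FinHypergraph.cut, Finset.mem_filter]
          exact ⟨heE, hne, ⟨x, Finset.mem_inter.mpr
            ⟨hx1, Finset.mem_sdiff.mpr ⟨(hu e heE).1 hx1, hx2⟩⟩⟩⟩
        rw [if_pos hcut]
        have hss : e ∩ A ⊂ e := by
          refine Finset.ssubset_iff_subset_ne.mpr ⟨Finset.inter_subset_left, ?_⟩
          intro hEq
          apply hx2
          have hx' : x ∈ e ∩ A := hEq.symm ▸ hx1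
          exact (Finset.mem_inter.mp hx').2
        have hlt := Finset.card_lt_card hss
        rw [(hu e heE).2] at hlt
        omega
      · rw [Finset.not_nonempty_iff_eq_empty] at hne
        rw [hne]
        simp
    calc ∑ e ∈ G.edges.filter (fun e => ¬ e ⊆ A), (e ∩ A).card
        ≤ ∑ e ∈ G.edges.filter (fun e => ¬ e ⊆ A), (if e ∈ G.cut A then 1 else 0) :=
          Finset.sum_le_sum step
      _ ≤ ∑ e ∈ G.edges, (if e ∈ G.cut A then 1 else 0) :=
          Finset.sum_le_sum_of_subset (Finset.filter_subset _ _)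
      _ = (G.edges.filter (fun e => e ∈ G.cut A)).card := (Finset.card_filter _ _).symm
      _ = (G.cut A).card := by
          rw [Finset.filter_mem_eq_inter, Finset.inter_eq_right.mpr (cut_subset_edges G A)]
  omega

lemma edges_card_split {G : FinHypergraph α} (hu : G.IsUniform 2) (A : Finset α) :
    G.edges.card = (G.induce A).edges.card + (G.induce (G.verts \ A)).edges.card
      + (G.cut A).card := by
  classical
  have h1 := Finset.card_filter_add_card_filter_not
    (s := G.edges) (p := (fun e => e ⊆ A))
  have h2 := Finset.card_filter_add_card_filter_not
    (s := G.edges.filter (fun e => ¬ e ⊆ A)) (p := (fun e => e ⊆ G.verts \ A))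
  have e1 : (G.edges.filter (fun e => ¬ e ⊆ A)).filter (fun e => e ⊆ G.verts \ A)
      = G.edges.filter (fun e => e ⊆ G.verts \ A) := by
    ext e
    simp only [Finset.mem_filter]
    constructor
    · rintro ⟨⟨h3, -⟩, h4⟩; exact ⟨h3, h4⟩
    · rintro ⟨h3, h4⟩
      refine ⟨⟨h3, ?_⟩, h4⟩
      intro hsubA
      have hene : e.Nonempty := Finset.card_pos.mp (by rw [(hu e h3).2]; omega)
      obtain ⟨x, hx⟩ := hene
      exact (Finset.mem_sdiff.mp (h4 hx)).2 (hsubA hx)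
  have e2 : (G.edges.filter (fun e => ¬ e ⊆ A)).filter (fun e => ¬ e ⊆ G.verts \ A)
      = G.cut A := by
    ext e
    simp only [Finset.mem_filter, FinHypergraph.cut]
    constructor
    · rintro ⟨⟨h3, h4⟩, h5⟩
      obtain ⟨x, hx1, hx2⟩ := Finset.not_subset.mp h4
      obtain ⟨y, hy1, hy2⟩ := Finset.not_subset.mp h5
      refine ⟨h3, ⟨y, ?_⟩, ⟨x, ?_⟩⟩
      · rw [Finset.mem_inter]
        refine ⟨hy1, ?_⟩
        by_contra hyA
        exact hy2 (Finset.mem_sdiff.mpr ⟨(hu e h3).1 hy1, hyA⟩)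
      · exact Finset.mem_inter.mpr ⟨hx1, Finset.mem_sdiff.mpr ⟨(hu e h3).1 hx1, hx2⟩⟩
    · rintro ⟨h3, ⟨x, hx⟩, ⟨y, hy⟩⟩
      rw [Finset.mem_inter] at hx hy
      rw [Finset.mem_sdiff] at hy
      refine ⟨⟨h3, ?_⟩, ?_⟩
      · intro hsubA; exact hy.2.2 (hsubA hy.1)
      · intro hsubB; exact (Finset.mem_sdiff.mp (hsubB hx.1)).2 hx.2
  have hiA : (G.induce A).edges.card = (G.edges.filter (fun e => e ⊆ A)).card := rfl
  have hiB : (G.induce (G.verts \ A)).edges.card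
      = (G.edges.filter (fun e => e ⊆ G.verts \ A)).card := rfl
  have c1 := congrArg Finset.card e1
  have c2 := congrArg Finset.card e2
  omega


lemma exists_valid_of_edgeConn_pos {H : FinHypergraph α} (h : 0 < H.edgeConn) :
    ∃ X : Finset α, X ⊆ H.verts ∧ X.Nonempty ∧ X ≠ H.verts := by
  by_contra hno
  push_neg at hno
  have hempty : {d : ℕ | ∃ X : Finset α, X ⊆ H.verts ∧ X.Nonempty ∧ X ≠ H.verts
      ∧ d = (H.cut X).card} = ∅ := by
    ext d
    simp only [Set.mem_setOf_eq, Set.mem_empty_iff_false, iff_false]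
    rintro ⟨X, h1, h2, h3, -⟩
    exact h3 (hno X h1 h2)
  unfold FinHypergraph.edgeConn at h
  rw [hempty, Nat.sInf_empty] at h
  omega

lemma cut_singleton_subset_image {H : FinHypergraph α} (h2 : ∀ e ∈ H.edges, e.card = 2) (w : α)
    (S : Finset α) (hS : ∀ y, y ∈ H.verts → y ≠ w → ({w, y} : Finset α) ∈ H.edges → y ∈ S) :
    H.cut {w} ⊆ S.image (fun y => ({w, y} : Finset α)) := by
  intro e' he'
  simp only [FinHypergraph.cut, Finset.mem_filter] at he'
  obtain ⟨hmem, ⟨x, hx⟩, ⟨y, hy⟩⟩ := he'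
  rw [Finset.mem_inter, Finset.mem_singleton] at hx
  rw [Finset.mem_inter, Finset.mem_sdiff] at hy
  have hye := hy.1
  have hyV := hy.2.1
  have hyw := hy.2.2
  rw [Finset.mem_singleton] at hyw
  have hwE : w ∈ e' := hx.2 ▸ hx.1
  obtain ⟨y', hy'e, hy'ne, hpair⟩ := edge_pair (h2 e' hmem) hwE
  have hyy' : y = y' := by
    have : y ∈ ({w, y'} : Finset α) := hpair ▸ hye
    rcases Finset.mem_insert.mp this with h' | h'
    · exact absurd h' hyw
    · exact Finset.mem_singleton.mp h'
  subst hyy'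
  have hyS : y ∈ S := hS y hyV hyw (hpair ▸ hmem)
  exact Finset.mem_image.mpr ⟨y, hyS, hpair.symm⟩

lemma missing_disjoint {G : FinHypergraph α} {k : ℕ} (hk : 1 ≤ k) (hG : G.IsEdgeMaximal k 2)
    (hn : G.verts.card = k + 2) {e1 e2 : Finset α}
    (h1 : e1 ∈ G.verts.powersetCard 2 \ G.edges) (h2 : e2 ∈ G.verts.powersetCard 2 \ G.edges)
    (hne : e1 ≠ e2) : Disjoint e1 e2 := by
  rw [Finset.disjoint_left]
  intro x hx1 hx2
  obtain ⟨hp1, hm1⟩ := Finset.mem_sdiff.mp h1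
  obtain ⟨hs1, hc1⟩ := Finset.mem_powersetCard.mp hp1
  obtain ⟨hp2, hm2⟩ := Finset.mem_sdiff.mp h2
  obtain ⟨hs2, hc2⟩ := Finset.mem_powersetCard.mp hp2
  obtain ⟨y1, hy1e, hy1ne, he1⟩ := edge_pair hc1 hx1
  obtain ⟨y2, hy2e, hy2ne, he2⟩ := edge_pair hc2 hx2
  have hyy : y1 ≠ y2 := by
    rintro rfl
    exact hne (he1.trans he2.symm)
  have hdeg := degree_ge hG (by omega) (hs1 hx1)
  have himg : G.edges.filter (fun e => x ∈ e)
      ⊆ (G.verts \ {x, y1, y2}).image (fun y => ({x, y} : Finset α)) := by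
    intro e he
    obtain ⟨heE, hxe⟩ := Finset.mem_filter.mp he
    obtain ⟨y, hye, hyne, hey⟩ := edge_pair (hG.1 e heE).2 hxe
    refine Finset.mem_image.mpr ⟨y, ?_, hey.symm⟩
    rw [Finset.mem_sdiff]
    refine ⟨(hG.1 e heE).1 hye, ?_⟩
    simp only [Finset.mem_insert, Finset.mem_singleton, not_or]
    refine ⟨hyne, ?_, ?_⟩
    · rintro rfl
      apply hm1
      have hEq : e1 = e := by rw [he1, hey]
      rw [hEq]
      exact heE
    · rintro rfl
      apply hm2
      have hEq : e2 = e := by rw [he2, hey]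
      rw [hEq]
      exact heE
  have hxyy : ({x, y1, y2} : Finset α) ⊆ G.verts := by
    intro z hz
    simp only [Finset.mem_insert, Finset.mem_singleton] at hz
    rcases hz with rfl | rfl | rfl
    · exact hs1 hx1
    · exact hs1 hy1e
    · exact hs2 hy2e
  have hcard3 : ({x, y1, y2} : Finset α).card = 3 := by
    rw [Finset.card_insert_of_notMem (by
        simp only [Finset.mem_insert, Finset.mem_singleton, not_or]
        exact ⟨fun h => hy1ne h.symm, fun h => hy2ne h.symm⟩),
      Finset.card_insert_of_notMem (by simp only [Finset.mem_singleton]; exact hyy),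
      Finset.card_singleton]
  have hsd : (G.verts \ ({x, y1, y2} : Finset α)).card = k - 1 := by
    rw [Finset.card_sdiff_of_subset hxyy, hcard3, hn]
    omega
  have hfinal := le_trans (Finset.card_le_card himg) Finset.card_image_le
  rw [hsd] at hfinal
  have : k ≤ k - 1 := le_trans hdeg hfinal
  omega

lemma base_case {G : FinHypergraph α} {k : ℕ} (hk : 1 ≤ k) (hG : G.IsEdgeMaximal k 2)
    (hn : G.verts.card = k + 2) : (k + 2).choose 2 ≤ G.edges.card + 1 := by
  have hM1 : (G.verts.powersetCard 2 \ G.edges).card ≤ 1 := by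
    by_contra h
    push_neg at h
    obtain ⟨e1, he1, e2, he2, hne⟩ := Finset.one_lt_card.mp h
    have hdisj := missing_disjoint hk hG hn he1 he2 hne
    obtain ⟨hp1, hm1⟩ := Finset.mem_sdiff.mp he1
    obtain ⟨hs1, hc1⟩ := Finset.mem_powersetCard.mp hp1
    obtain ⟨hp2, hm2⟩ := Finset.mem_sdiff.mp he2
    obtain ⟨hs2, hc2⟩ := Finset.mem_powersetCard.mp hp2
    have hstr := hG.2.2 e1 hs1 hc1 hm1
    obtain ⟨H, hsub, heq⟩ := exists_strength_witness (G.addEdge e1)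
    rw [heq] at hstr
    have hH2 : ∀ e ∈ H.edges, e.card = 2 := by
      intro e he
      rcases Finset.mem_insert.mp (hsub.2 he) with rfl | h'
      · exact hc1
      · exact (hG.1 e h').2
    have hpos : 0 < H.edgeConn := by omega
    obtain ⟨X, hX1, hX2, hX3⟩ := exists_valid_of_edgeConn_pos hpos
    obtain ⟨w0, hw0⟩ := hX2
    obtain ⟨z0, hz0, hz0'⟩ := Finset.not_subset.mp
      (fun hss => hX3 (Finset.Subset.antisymm hX1 hss))
    have hVH2 : 1 < H.verts.card :=
      Finset.one_lt_card.mpr ⟨w0, hX1 hw0, z0, hz0, fun h => hz0' (h ▸ hw0)⟩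
    have hcutw : ∀ w ∈ H.verts, k + 1 ≤ (H.cut {w}).card := by
      intro w hw
      refine le_trans hstr (edgeConn_le H (Finset.singleton_subset_iff.mpr hw)
        ⟨w, Finset.mem_singleton_self w⟩ ?_)
      intro hEq
      rw [← hEq, Finset.card_singleton] at hVH2
      omega
    have hVHall : H.verts = G.verts := by
      have hw : w0 ∈ H.verts := hX1 hw0
      have himg := cut_singleton_subset_image hH2 w0 (H.verts.erase w0)
        (fun y hy hyne _ => Finset.mem_erase.mpr ⟨hyne, hy⟩)
      have hle := le_trans (hcutw w0 hw)
        (le_trans (Finset.card_le_card himg) Finset.card_image_le)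
      rw [Finset.card_erase_of_mem hw] at hle
      have hcard : G.verts.card ≤ H.verts.card := by rw [hn]; omega
      exact Finset.eq_of_subset_of_card_le hsub.1 hcard
    obtain ⟨u2, v2, huv2, he2eq⟩ := Finset.card_eq_two.mp hc2
    have hu2V : u2 ∈ G.verts := hs2 (by rw [he2eq]; exact Finset.mem_insert_self _ _)
    have hv2V : v2 ∈ G.verts := hs2 (by
      rw [he2eq]; exact Finset.mem_insert.mpr (Or.inr (Finset.mem_singleton_self _)))
    have hu2 : u2 ∈ H.verts := by rw [hVHall]; exact hu2V
    have himg2 := cut_singleton_subset_image hH2 u2 ((H.verts.erase u2).erase v2)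
      (by
        intro y hy hyne hmem
        refine Finset.mem_erase.mpr ⟨?_, Finset.mem_erase.mpr ⟨hyne, hy⟩⟩
        rintro rfl
        have he2' : ({u2, y} : Finset α) = e2 := he2eq.symm
        rw [he2'] at hmem
        rcases Finset.mem_insert.mp (hsub.2 hmem) with h' | h'
        · exact hne h'.symm
        · exact hm2 h')
    have hle2 := le_trans (hcutw u2 hu2)
      (le_trans (Finset.card_le_card himg2) Finset.card_image_le)
    have hv2H : v2 ∈ H.verts.erase u2 := by
      rw [Finset.mem_erase, hVHall]
      exact ⟨fun h => huv2 h.symm, hv2V⟩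
    rw [Finset.card_erase_of_mem hv2H, Finset.card_erase_of_mem hu2, hVHall, hn] at hle2
    omega
  have hcover : G.verts.powersetCard 2 ⊆ G.edges ∪ (G.verts.powersetCard 2 \ G.edges) := by
    intro p hp
    by_cases h : p ∈ G.edges
    · exact Finset.mem_union_left _ h
    · exact Finset.mem_union_right _ (Finset.mem_sdiff.mpr ⟨hp, h⟩)
  have hle := le_trans (Finset.card_le_card hcover) (Finset.card_union_le _ _)
  rw [Finset.card_powersetCard, hn] at hle
  omega

lemma two_mul_choose_two (m : ℕ) : 2 * m.choose 2 = m * (m - 1) := by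
  rw [Nat.choose_two_right]
  apply Nat.mul_div_cancel'
  rcases m with - | s
  · simp
  · have : Even ((s + 1) * s) := by
      rw [mul_comm]
      exact Nat.even_mul_succ_self s
    simpa using this.two_dvd

lemma side_large {G : FinHypergraph α} {k : ℕ} (hu : G.IsUniform 2)
    (hdeg : ∀ w ∈ G.verts, k + 1 ≤ G.degree w) {A : Finset α} (hA : A ⊆ G.verts)
    (hAne : A.Nonempty) (hcut : (G.cut A).card ≤ k) : k + 2 ≤ A.card := by
  have hsum : A.card * (k + 1) ≤ ∑ w ∈ A, G.degree w := by
    calc A.card * (k + 1) = ∑ _w ∈ A, (k + 1) := by rw [Finset.sum_const, smul_eq_mul]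
      _ ≤ ∑ w ∈ A, G.degree w := Finset.sum_le_sum (fun w hw => hdeg w (hA hw))
  have hsd := sum_degree_le hu A
  have hEA : (G.induce A).edges.card ≤ A.card.choose 2 := by
    have hss : (G.induce A).edges ⊆ A.powersetCard 2 := by
      intro e he
      obtain ⟨heE, heA⟩ := Finset.mem_filter.mp he
      exact Finset.mem_powersetCard.mpr ⟨heA, (hu e heE).2⟩
    calc (G.induce A).edges.card ≤ (A.powersetCard 2).card := Finset.card_le_card hss
      _ = A.card.choose 2 := by rw [Finset.card_powersetCard]
  have h2 := two_mul_choose_two A.card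
  by_contra hlt
  push_neg at hlt
  obtain ⟨b, hb⟩ : ∃ b, A.card = b + 1 := by
    obtain ⟨x, hx⟩ := hAne
    have := Finset.card_pos.mpr ⟨x, hx⟩
    exact ⟨A.card - 1, by omega⟩
  rw [hb] at hsum hlt h2 hEA
  have hble : b ≤ k := by omega
  have hkey : (b + 1) * (k + 1) ≤ (b + 1) * b + k := by
    calc (b + 1) * (k + 1) ≤ ∑ w ∈ A, G.degree w := hsum
      _ ≤ 2 * (G.induce A).edges.card + (G.cut A).card := hsd
      _ ≤ 2 * ((b + 1).choose 2) + k := by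
          have := Nat.mul_le_mul_left 2 hEA
          omega
      _ = (b + 1) * b + k := by rw [h2]; simp
  have hexp1 : (b + 1) * (k + 1) = b * k + b + k + 1 := by ring
  have hexp2 : (b + 1) * b = b * b + b := by ring
  have hbb : b * b ≤ b * k := Nat.mul_le_mul_left b hble
  omega

lemma nat_div_add_div_le (a b q : ℕ) (hq : 0 < q) : a / q + b / q ≤ (a + b) / q := by
  rw [Nat.le_div_iff_mul_le hq, add_mul]
  exact add_le_add (Nat.div_mul_le_self a q) (Nat.div_mul_le_self b q)

lemma main_aux (k : ℕ) (hk : 1 ≤ k) :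
    ∀ (n : ℕ) (G : FinHypergraph α), G.IsEdgeMaximal k 2 → G.verts.card = n → k + 2 ≤ n →
    ((n : ℤ) - 1) * k - ((n / (k + 2) : ℕ) : ℤ) * (k.choose 2 : ℤ) ≤ (G.edges.card : ℤ) := by
  intro n
  induction n using Nat.strong_induction_on with
  | _ n IH =>
    intro G hG hn hkn
    have hc2 : (2 : ℤ) * (k.choose 2 : ℤ) = (k : ℤ) * ((k : ℤ) - 1) := by
      have := two_mul_choose_two k
      have hcast : ((2 * k.choose 2 : ℕ) : ℤ) = ((k * (k - 1) : ℕ) : ℤ) := by rw [this]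
      push_cast [Nat.cast_sub hk] at hcast
      push_cast
      linarith
    by_cases hbase : n = k + 2
    · subst hbase
      have hb := base_case hk hG hn
      have hdiv : (k + 2) / (k + 2) = 1 := Nat.div_self (by omega)
      rw [hdiv]
      have hC2 : (2 : ℤ) * ((k + 2).choose 2 : ℤ) = ((k : ℤ) + 2) * ((k : ℤ) + 1) := by
        have := two_mul_choose_two (k + 2)
        have hcast : ((2 * (k + 2).choose 2 : ℕ) : ℤ) = (((k + 2) * (k + 2 - 1) : ℕ) : ℤ) := by
          rw [this]
        push_cast at hcast
        push_cast
        linarith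
      have hbZ : (((k + 2).choose 2 : ℕ) : ℤ) ≤ (G.edges.card : ℤ) + 1 := by
        exact_mod_cast hb
      push_cast
      linarith [hbZ, hC2, hc2]
    · -- n ≥ k + 3
      have hn3 : k + 3 ≤ n := by omega
      have hnn : k + 2 ≤ G.verts.card := by omega
      by_cases hdegk : ∃ v ∈ G.verts, G.degree v ≤ k
      · -- split off a vertex of degree k
        obtain ⟨v, hvV, hvd⟩ := hdegk
        have hvd' : G.degree v = k := le_antisymm hvd (degree_ge hG hnn hvV)
        have hcutv : (G.cut {v}).card = k := by
          rw [cut_singleton hG.1 hvV]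
          exact hvd'
        have hsingsub : ({v} : Finset α) ⊆ G.verts := Finset.singleton_subset_iff.mpr hvV
        have hcutB : (G.cut (G.verts \ {v})).card = k := by rw [cut_compl G hsingsub]; exact hcutv
        have hBsub : G.verts \ {v} ⊆ G.verts := Finset.sdiff_subset
        have hBmax : (G.induce (G.verts \ {v})).IsEdgeMaximal k 2 := by
          apply induce_isEdgeMaximal hG hBsub (le_of_eq hcutB)
          intro hss
          exact (Finset.mem_sdiff.mp (hss hvV)).2 (Finset.mem_singleton_self v)
        have hBcard : (G.verts \ {v}).card = n - 1 := by
          rw [Finset.card_sdiff_of_subset hsingsub, Finset.card_singleton, hn]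
        have hIH := IH (n - 1) (by omega) (G.induce (G.verts \ {v})) hBmax hBcard (by omega)
        have hsplit := edges_card_split hG.1 (A := {v}) (G := G)
        rw [hcutv] at hsplit
        have hEcard : (G.induce (G.verts \ {v})).edges.card + k ≤ G.edges.card := by omega
        have hfloor : ((n - 1) / (k + 2) : ℕ) ≤ (n / (k + 2) : ℕ) :=
          Nat.div_le_div_right (by omega)
        have hchoosenn : (0 : ℤ) ≤ (k.choose 2 : ℤ) := by positivity
        have hcastn : (((n - 1 : ℕ)) : ℤ) = (n : ℤ) - 1 := by
          have : (1 : ℕ) ≤ n := by omega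
          push_cast [Nat.cast_sub this]
          ring
        rw [hcastn] at hIH
        have hfloorZ : (((n - 1) / (k + 2) : ℕ) : ℤ) ≤ ((n / (k + 2) : ℕ) : ℤ) := by
          exact_mod_cast hfloor
        have hEZ : ((G.induce (G.verts \ {v})).edges.card : ℤ) + k ≤ (G.edges.card : ℤ) := by
          exact_mod_cast hEcard
        have hmulf := mul_le_mul_of_nonneg_right hfloorZ hchoosenn
        have hsplitk : ((n : ℤ) - 1) * k = ((n : ℤ) - 1 - 1) * k + k := by ring
        linarith [hIH, hEZ, hmulf]
      · -- minimum degree ≥ k + 1 : split along a minimum edge cut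
        push_neg at hdegk
        have hdeg : ∀ w ∈ G.verts, k + 1 ≤ G.degree w := fun w hw => hdegk w hw
        -- a minimum cut exists
        have hvne : G.verts.Nonempty := Finset.card_pos.mp (by omega)
        obtain ⟨w1, hw1⟩ := hvne
        have hsetne : {d : ℕ | ∃ X : Finset α, X ⊆ G.verts ∧ X.Nonempty ∧ X ≠ G.verts
            ∧ d = (G.cut X).card}.Nonempty := by
          refine ⟨(G.cut {w1}).card, {w1}, Finset.singleton_subset_iff.mpr hw1,
            ⟨w1, Finset.mem_singleton_self w1⟩, ?_, rfl⟩
          intro hEq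
          rw [← hEq, Finset.card_singleton] at hn
          omega
        have hmem := Nat.sInf_mem hsetne
        obtain ⟨Y, hY1, hY2, hY3, hYcard⟩ := hmem
        have hconn_le : G.edgeConn ≤ k := le_trans (le_strength (isSub_refl G)) hG.2.1
        have hYconn : G.edgeConn = (G.cut Y).card := hYcard
        have hcutY : (G.cut Y).card ≤ k := hYconn ▸ hconn_le
        have hcutYge : k ≤ (G.cut Y).card := cut_card_ge hG hnn hY1 hY2 hY3
        set B := G.verts \ Y with hBdef
        have hBsub : B ⊆ G.verts := Finset.sdiff_subset
        have hBne : B.Nonempty := by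
          obtain ⟨x, hx1, hx2⟩ := Finset.exists_of_ssubset
            (Finset.ssubset_iff_subset_ne.mpr ⟨hY1, hY3⟩)
          exact ⟨x, Finset.mem_sdiff.mpr ⟨hx1, hx2⟩⟩
        have hcutB : (G.cut B).card = (G.cut Y).card := by rw [hBdef, cut_compl G hY1]
        have haY : k + 2 ≤ Y.card := side_large hG.1 hdeg hY1 hY2 hcutY
        have haB : k + 2 ≤ B.card := side_large hG.1 hdeg hBsub hBne (by omega)
        have hsum : B.card + Y.card = n := by rw [hBdef, Finset.card_sdiff_add_card_eq_card hY1, hn]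
        have hYmax : (G.induce Y).IsEdgeMaximal k 2 := by
          apply induce_isEdgeMaximal hG hY1 hcutY
          intro hss
          obtain ⟨x, hx⟩ := hBne
          rw [hBdef, Finset.mem_sdiff] at hx
          exact hx.2 (hss hx.1)
        have hBmax : (G.induce B).IsEdgeMaximal k 2 := by
          apply induce_isEdgeMaximal hG hBsub (by omega)
          intro hss
          obtain ⟨y, hy⟩ := hY2
          exact (Finset.mem_sdiff.mp (hss (hY1 hy))).2 hy
        have hIHY := IH Y.card (by omega) (G.induce Y) hYmax rfl (by omega)
        have hIHB := IH B.card (by omega) (G.induce B) hBmax rfl (by omega)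
        have hsplit := edges_card_split hG.1 (A := Y) (G := G)
        have hEcard : (G.induce Y).edges.card + (G.induce B).edges.card + k
            ≤ G.edges.card := by
          rw [← hBdef] at hsplit
          omega
        have hfloor : Y.card / (k + 2) + B.card / (k + 2) ≤ n / (k + 2) := by
          rw [← hsum, add_comm (B.card)]
          exact nat_div_add_div_le _ _ _ (by omega)
        have hchoosenn : (0 : ℤ) ≤ (k.choose 2 : ℤ) := by positivity
        have hfloorZ : ((Y.card / (k + 2) : ℕ) : ℤ) + ((B.card / (k + 2) : ℕ) : ℤ)
            ≤ ((n / (k + 2) : ℕ) : ℤ) := by exact_mod_cast hfloor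
        have hEZ : ((G.induce Y).edges.card : ℤ) + ((G.induce B).edges.card : ℤ) + k
            ≤ (G.edges.card : ℤ) := by exact_mod_cast hEcard
        have hsumZ : ((B.card : ℕ) : ℤ) + ((Y.card : ℕ) : ℤ) = (n : ℤ) := by exact_mod_cast hsum
        have hmulf := mul_le_mul_of_nonneg_right hfloorZ hchoosenn
        have hsplitk : ((n : ℤ) - 1) * k
            = ((Y.card : ℤ) - 1) * k + ((B.card : ℤ) - 1) * k + k := by
          rw [← hsumZ]; ring
        linarith [hIHY, hIHB, hEZ, hmulf]

end LaiAux

/-- Lai. Let `k ≥ 1` and let `G` be a `k`-edge-maximal simple graph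
(a `2`-uniform hypergraph) on `n > k+1` vertices. Then
`|E(G)| ≥ (n-1)·k - ⌊n/(k+2)⌋·C(k,2)`. -/
theorem lai_lower_bound {α : Type*} [DecidableEq α] (k n : ℕ) (hk : 1 ≤ k)
    (G : FinHypergraph α) (hG : G.IsEdgeMaximal k 2)
    (hn : G.verts.card = n) (hnk : k + 1 < n) :
    ((n : ℤ) - 1) * k - ((n / (k + 2) : ℕ) : ℤ) * (k.choose 2 : ℤ)
      ≤ (G.edges.card : ℤ) := by
  exact LaiAux.main_aux k hk n G hG hn (by omega)
end
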